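/- arXiv:2405.05103 — 3 statements merged into one kernel-verified Lean document; each statement's English description precedes it below -/
import Mathlib

section
/- Suppose S₁, S₂, S₃ and S₄ are all non-empty. Then the multistability criterion holds if and only if Σ_{i∈S₁} a_i > min_{i∈S₄} a_i or Σ_{i∈S₂} a_i > min_{i∈S₃} a_i. (This is Theorem 3.1(a): a bi-reaction network with one-dimensional stoichiometric subspace and 0 < cap_pos(G) < ∞ with all four sign classes non-empty admits multistability iff this inequality holds.) -/
open Finset

/-- The function `g` from the paper (eq. (3.4)/(4.4)), written with explicit sign classes. -/
noncomputable def gFun {s : ℕ} (S1 S2 S3 S4 : Finset (Fin s)) (a d : Fin s → ℝ) (z : ℝ) : ℝ :=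
  ∑ i ∈ S1, a i * Real.log (z + d i) - ∑ i ∈ S2, a i * Real.log (d i - z)
    + ∑ i ∈ S3, a i * Real.log (d i - z) - ∑ i ∈ S4, a i * Real.log (z + d i)

/-- The derivative `g'` of `g` (eq. (4.10)). -/
noncomputable def gDeriv {s : ℕ} (S1 S2 S3 S4 : Finset (Fin s)) (a d : Fin s → ℝ) (z : ℝ) : ℝ :=
  ∑ i ∈ S1, a i / (z + d i) + ∑ i ∈ S2, a i / (d i - z)
    - ∑ i ∈ S3, a i / (d i - z) - ∑ i ∈ S4, a i / (z + d i)

/-- Membership in the open interval `I = (𝓛, 𝓡)`, where `𝓛 = max_{i ∈ S1 ∪ S4} (-d i)`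
(or `-∞` if `S1 ∪ S4 = ∅`) and `𝓡 = min_{i ∈ S2 ∪ S3} d i` (or `+∞` if `S2 ∪ S3 = ∅`). -/
def memI {s : ℕ} (S1 S2 S3 S4 : Finset (Fin s)) (d : Fin s → ℝ) (z : ℝ) : Prop :=
  (∀ i ∈ S1 ∪ S4, -d i < z) ∧ (∀ i ∈ S2 ∪ S3, z < d i)

/-- The multistability criterion: there exist pairwise distinct `d i`, a level `K` and two
distinct points of `I` where `g` takes the value `K` with negative derivative. -/
def MultistabCriterion {s : ℕ} (S1 S2 S3 S4 : Finset (Fin s)) (a : Fin s → ℝ) : Prop :=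
  ∃ d : Fin s → ℝ, Function.Injective d ∧
    ∃ K z₁ z₂ : ℝ, z₁ ≠ z₂ ∧
      memI S1 S2 S3 S4 d z₁ ∧ memI S1 S2 S3 S4 d z₂ ∧
      gFun S1 S2 S3 S4 a d z₁ = K ∧ gFun S1 S2 S3 S4 a d z₂ = K ∧
      gDeriv S1 S2 S3 S4 a d z₁ < 0 ∧ gDeriv S1 S2 S3 S4 a d z₂ < 0

open Filter Set

lemma slope_neg_right {f : ℝ → ℝ} {f' x : ℝ} (hf : HasDerivAt f f' x) (h : f' < 0) :
    ∀ᶠ y in nhdsWithin x (Set.Ioi x), f y < f x := by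
  have hs := hasDerivAt_iff_tendsto_slope.1 hf
  have hss : Tendsto (slope f x) (nhdsWithin x (Set.Ioi x)) (nhds f') :=
    hs.mono_left (nhdsWithin_mono x (fun y hy => ne_of_gt hy))
  have hev : ∀ᶠ y in nhdsWithin x (Set.Ioi x), slope f x y < 0 :=
    hss.eventually_lt_const h  -- maybe name: Filter.Tendsto.eventually_lt_const?
  filter_upwards [hev, self_mem_nhdsWithin] with y hy hy2
  have hxy : (0:ℝ) < y - x := by
    have : x < y := hy2
    linarith
  rw [slope_def_field, div_neg_iff] at hy
  rcases hy with ⟨h1, h2⟩ | ⟨h1, h2⟩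
  · linarith
  · linarith

lemma slope_pos_left {f : ℝ → ℝ} {f' x : ℝ} (hf : HasDerivAt f f' x) (h : 0 < f') :
    ∀ᶠ y in nhdsWithin x (Set.Iio x), f y < f x := by
  have hs := hasDerivAt_iff_tendsto_slope.1 hf
  have hss : Tendsto (slope f x) (nhdsWithin x (Set.Iio x)) (nhds f') :=
    hs.mono_left (nhdsWithin_mono x (fun y hy => ne_of_lt hy))
  have hev : ∀ᶠ y in nhdsWithin x (Set.Iio x), 0 < slope f x y :=
    hss.eventually_const_lt h
  filter_upwards [hev, self_mem_nhdsWithin] with y hy hy2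
  have hxy : y - x < 0 := by have : y < x := hy2; linarith
  rw [slope_def_field, div_pos_iff] at hy
  rcases hy with ⟨h1, h2⟩ | ⟨h1, h2⟩
  · linarith
  · linarith

lemma slope_neg_left {f : ℝ → ℝ} {f' x : ℝ} (hf : HasDerivAt f f' x) (h : f' < 0) :
    ∀ᶠ y in nhdsWithin x (Set.Iio x), f x < f y := by
  have hs := hasDerivAt_iff_tendsto_slope.1 hf
  have hss : Tendsto (slope f x) (nhdsWithin x (Set.Iio x)) (nhds f') :=
    hs.mono_left (nhdsWithin_mono x (fun y hy => ne_of_lt hy))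
  have hev : ∀ᶠ y in nhdsWithin x (Set.Iio x), slope f x y < 0 :=
    hss.eventually_lt_const h
  filter_upwards [hev, self_mem_nhdsWithin] with y hy hy2
  have hxy : y - x < 0 := by have : y < x := hy2; linarith
  rw [slope_def_field, div_neg_iff] at hy
  rcases hy with ⟨h1, h2⟩ | ⟨h1, h2⟩
  · linarith
  · linarith

section key
variable {n : ℕ} {S T : Finset (Fin n)} {a X : Fin n → ℝ}

/-- Key step: if `∑_S a ≤ a j` for all `j ∈ T`, values of `X` are positive and pairwise
distinct across `S` and `T`, and `∑_S a X ≥ ∑_T a X`, then `∑_S a X² > ∑_T a X²`. -/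
lemma keyStep1 (hS : S.Nonempty) (hT : T.Nonempty)
    (ha : ∀ i, 0 < a i) (hX : ∀ i ∈ S ∪ T, 0 < X i)
    (hd : ∀ i ∈ S, ∀ j ∈ T, X i ≠ X j)
    (hcond : ∀ j ∈ T, ∑ i ∈ S, a i ≤ a j)
    (h1 : ∑ i ∈ T, a i * X i ≤ ∑ i ∈ S, a i * X i) :
    ∑ i ∈ T, a i * X i ^ 2 < ∑ i ∈ S, a i * X i ^ 2 := by
  obtain ⟨M, hM, hMmax⟩ := T.exists_max_image X hT
  have hXM : 0 < X M := hX M (Finset.mem_union_right _ hM)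
  set A := ∑ i ∈ S, a i with hA
  set P1 := ∑ i ∈ S, a i * X i with hP1
  set P2 := ∑ i ∈ S, a i * X i ^ 2 with hP2
  set Q1 := ∑ i ∈ T, a i * X i with hQ1
  set Q2 := ∑ i ∈ T, a i * X i ^ 2 with hQ2
  have hQ1nn : ∀ i ∈ T, 0 ≤ a i * X i := fun i hi =>
    le_of_lt (mul_pos (ha i) (hX i (Finset.mem_union_right _ hi)))
  have haMXM : a M * X M ≤ Q1 := Finset.single_le_sum hQ1nn hM
  have hAXM : A * X M ≤ P1 := by
    have := hcond M hM
    nlinarith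
  -- variance
  have hvar : 0 < ∑ i ∈ S, a i * (X i - X M) ^ 2 := by
    apply Finset.sum_pos'
    · intro i _; exact mul_nonneg (ha i).le (sq_nonneg _)
    · obtain ⟨i0, hi0⟩ := hS
      refine ⟨i0, hi0, ?_⟩
      have hne : X i0 - X M ≠ 0 := sub_ne_zero.2 (hd i0 hi0 M hM)
      have h2 : (0:ℝ) < (X i0 - X M) ^ 2 := by positivity
      exact mul_pos (ha i0) h2
  have hexp : ∑ i ∈ S, a i * (X i - X M) ^ 2
      = P2 - 2 * X M * P1 + X M ^ 2 * A := by
    rw [hP2, hP1, hA, Finset.mul_sum, Finset.mul_sum, ← Finset.sum_sub_distrib,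
      ← Finset.sum_add_distrib]
    exact Finset.sum_congr rfl fun i _ => by ring
  have hP2gt : X M * P1 < P2 := by nlinarith
  have hQ2le : Q2 ≤ X M * Q1 := by
    rw [hQ2, hQ1, Finset.mul_sum]
    apply Finset.sum_le_sum
    intro i hi
    have hXi : 0 < X i := hX i (Finset.mem_union_right _ hi)
    have hle := hMmax i hi
    nlinarith [mul_le_mul_of_nonneg_left hle (mul_nonneg (ha i).le hXi.le)]
  nlinarith

lemma keyStep2 (hS : S.Nonempty) (hT : T.Nonempty)
    (ha : ∀ i, 0 < a i) (hX : ∀ i ∈ S ∪ T, 0 < X i)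
    (hd : ∀ i ∈ S, ∀ j ∈ T, X i ≠ X j)
    (hcond : ∀ j ∈ T, ∑ i ∈ S, a i ≤ a j)
    (h1 : ∑ i ∈ T, a i * X i ^ 2 ≤ ∑ i ∈ S, a i * X i ^ 2) :
    ∑ i ∈ T, a i * X i ^ 3 < ∑ i ∈ S, a i * X i ^ 3 := by
  obtain ⟨M, hM, hMmax⟩ := T.exists_max_image X hT
  have hXM : 0 < X M := hX M (Finset.mem_union_right _ hM)
  set A := ∑ i ∈ S, a i with hA
  set P1 := ∑ i ∈ S, a i * X i with hP1
  set P2 := ∑ i ∈ S, a i * X i ^ 2 with hP2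
  set P3 := ∑ i ∈ S, a i * X i ^ 3 with hP3
  set Q2 := ∑ i ∈ T, a i * X i ^ 2 with hQ2
  set Q3 := ∑ i ∈ T, a i * X i ^ 3 with hQ3
  have hQ2nn : ∀ i ∈ T, 0 ≤ a i * X i ^ 2 := fun i hi =>
    mul_nonneg (ha i).le (sq_nonneg _)
  have haMXM : a M * X M ^ 2 ≤ Q2 := Finset.single_le_sum hQ2nn hM
  have hAXM : A * X M ^ 2 ≤ P2 := by
    have := hcond M hM
    nlinarith
  have hvar1 : 0 < ∑ i ∈ S, a i * (X i - X M) ^ 2 := by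
    apply Finset.sum_pos'
    · intro i _; exact mul_nonneg (ha i).le (sq_nonneg _)
    · obtain ⟨i0, hi0⟩ := hS
      exact ⟨i0, hi0, mul_pos (ha i0) (by
        have hne : X i0 - X M ≠ 0 := sub_ne_zero.2 (hd i0 hi0 M hM)
        positivity)⟩
  have hexp1 : ∑ i ∈ S, a i * (X i - X M) ^ 2
      = P2 - 2 * X M * P1 + X M ^ 2 * A := by
    rw [hP2, hP1, hA, Finset.mul_sum, Finset.mul_sum, ← Finset.sum_sub_distrib,
      ← Finset.sum_add_distrib]
    exact Finset.sum_congr rfl fun i _ => by ring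
  have hXMP1 : X M * P1 < P2 := by nlinarith
  have hvar2 : 0 < ∑ i ∈ S, a i * X i * (X i - X M) ^ 2 := by
    apply Finset.sum_pos'
    · intro i hi
      have hXi := hX i (Finset.mem_union_left _ hi)
      exact mul_nonneg (mul_nonneg (ha i).le hXi.le) (sq_nonneg _)
    · obtain ⟨i0, hi0⟩ := hS
      have hx0 := hX i0 (Finset.mem_union_left _ hi0)
      refine ⟨i0, hi0, ?_⟩
      have hne : X i0 - X M ≠ 0 := sub_ne_zero.2 (hd i0 hi0 M hM)
      have h2 : (0:ℝ) < (X i0 - X M) ^ 2 := by positivity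
      exact mul_pos (mul_pos (ha i0) hx0) h2
  have hexp2 : ∑ i ∈ S, a i * X i * (X i - X M) ^ 2
      = P3 - 2 * X M * P2 + X M ^ 2 * P1 := by
    rw [hP3, hP2, hP1, Finset.mul_sum, Finset.mul_sum, ← Finset.sum_sub_distrib,
      ← Finset.sum_add_distrib]
    exact Finset.sum_congr rfl fun i _ => by ring
  have hP3gt : X M * P2 < P3 := by nlinarith
  have hQ3le : Q3 ≤ X M * Q2 := by
    rw [hQ3, hQ2, Finset.mul_sum]
    apply Finset.sum_le_sum
    intro i hi
    have hXi : 0 < X i := hX i (Finset.mem_union_right _ hi)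
    have hle := hMmax i hi
    nlinarith [mul_le_mul_of_nonneg_left hle (mul_nonneg (ha i).le (by positivity : (0:ℝ) ≤ X i ^ 2))]
  nlinarith
end key

noncomputable def gD2 {s : ℕ} (S1 S2 S3 S4 : Finset (Fin s)) (a d : Fin s → ℝ) (z : ℝ) : ℝ :=
  (∑ i ∈ S4, a i / (z + d i) ^ 2 - ∑ i ∈ S1, a i / (z + d i) ^ 2)
    + (∑ i ∈ S2, a i / (d i - z) ^ 2 - ∑ i ∈ S3, a i / (d i - z) ^ 2)

noncomputable def gD3 {s : ℕ} (S1 S2 S3 S4 : Finset (Fin s)) (a d : Fin s → ℝ) (z : ℝ) : ℝ :=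
  2 * ((∑ i ∈ S1, a i / (z + d i) ^ 3 - ∑ i ∈ S4, a i / (z + d i) ^ 3)
    + (∑ i ∈ S2, a i / (d i - z) ^ 3 - ∑ i ∈ S3, a i / (d i - z) ^ 3))

section derivs
variable {s : ℕ} (S1 S2 S3 S4 : Finset (Fin s)) (a d : Fin s → ℝ) {z : ℝ}

lemma term_log_plus (i : Fin s) (h : 0 < z + d i) :
    HasDerivAt (fun y => a i * Real.log (y + d i)) (a i / (z + d i)) z := by
  have h1 : HasDerivAt (fun y : ℝ => y + d i) 1 z := (hasDerivAt_id z).add_const (d i)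
  have h2 := (h1.log (ne_of_gt h)).const_mul (a i)
  simpa [div_eq_mul_inv] using h2

lemma term_log_minus (i : Fin s) (h : 0 < d i - z) :
    HasDerivAt (fun y => a i * Real.log (d i - y)) (-(a i / (d i - z))) z := by
  have h1 : HasDerivAt (fun y : ℝ => d i - y) (-1) z := (hasDerivAt_id z).const_sub (d i)
  have h2 := (h1.log (ne_of_gt h)).const_mul (a i)
  have : a i * (-1 / (d i - z)) = -(a i / (d i - z)) := by ring
  simpa [this] using h2

lemma term_inv_plus (i : Fin s) (h : 0 < z + d i) :
    HasDerivAt (fun y => a i / (y + d i)) (-(a i / (z + d i) ^ 2)) z := by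
  have h1 : HasDerivAt (fun y : ℝ => y + d i) 1 z := (hasDerivAt_id z).add_const (d i)
  have h2 := (h1.inv (ne_of_gt h)).const_mul (a i)
  have e1 : a i * (-1 / (z + d i) ^ 2) = -(a i / (z + d i) ^ 2) := by ring
  have e2 : (fun y : ℝ => a i * (y + d i)⁻¹) = fun y => a i / (y + d i) := by
    funext y; rw [div_eq_mul_inv]
  rw [e1] at h2
  rw [← e2]
  exact h2

lemma term_inv_minus (i : Fin s) (h : 0 < d i - z) :
    HasDerivAt (fun y => a i / (d i - y)) (a i / (d i - z) ^ 2) z := by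
  have h1 : HasDerivAt (fun y : ℝ => d i - y) (-1) z := (hasDerivAt_id z).const_sub (d i)
  have h2 := (h1.inv (ne_of_gt h)).const_mul (a i)
  have e1 : a i * (- (-1) / (d i - z) ^ 2) = a i / (d i - z) ^ 2 := by ring
  have e2 : (fun y : ℝ => a i * (d i - y)⁻¹) = fun y => a i / (d i - y) := by
    funext y; rw [div_eq_mul_inv]
  rw [e1] at h2
  rw [← e2]
  exact h2

lemma term_sq_plus (i : Fin s) (h : 0 < z + d i) :
    HasDerivAt (fun y => a i / (y + d i) ^ 2) (-(2 * (a i / (z + d i) ^ 3))) z := by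
  have h1 : HasDerivAt (fun y : ℝ => (y + d i) ^ 2) (2 * (z + d i)) z := by
    have := ((hasDerivAt_id z).add_const (d i)).pow 2
    simpa [Pi.pow_def] using this
  have hne : (z + d i) ^ 2 ≠ 0 := by positivity
  have h2 := (h1.inv hne).const_mul (a i)
  have e1 : a i * (-(2 * (z + d i)) / ((z + d i) ^ 2) ^ 2) = -(2 * (a i / (z + d i) ^ 3)) := by
    field_simp
  have e2 : (fun y : ℝ => a i * ((y + d i) ^ 2)⁻¹) = fun y => a i / (y + d i) ^ 2 := by
    funext y; rw [div_eq_mul_inv]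
  rw [e1] at h2
  rw [← e2]
  exact h2

lemma term_sq_minus (i : Fin s) (h : 0 < d i - z) :
    HasDerivAt (fun y => a i / (d i - y) ^ 2) (2 * (a i / (d i - z) ^ 3)) z := by
  have h1 : HasDerivAt (fun y : ℝ => (d i - y) ^ 2) (2 * (d i - z) * (-1)) z := by
    have := ((hasDerivAt_id z).const_sub (d i)).pow 2
    simpa [Pi.pow_def] using this
  have hne : (d i - z) ^ 2 ≠ 0 := by positivity
  have h2 := (h1.inv hne).const_mul (a i)
  have e1 : a i * (-(2 * (d i - z) * (-1)) / ((d i - z) ^ 2) ^ 2) = 2 * (a i / (d i - z) ^ 3) := by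
    field_simp
  have e2 : (fun y : ℝ => a i * ((d i - y) ^ 2)⁻¹) = fun y => a i / (d i - y) ^ 2 := by
    funext y; rw [div_eq_mul_inv]
  rw [e1] at h2
  rw [← e2]
  exact h2

variable (hz1 : ∀ i ∈ S1 ∪ S4, 0 < z + d i) (hz2 : ∀ i ∈ S2 ∪ S3, 0 < d i - z)

include hz1 hz2 in
lemma hasDerivAt_gFun :
    HasDerivAt (gFun S1 S2 S3 S4 a d) (gDeriv S1 S2 S3 S4 a d z) z := by
  have H1 : HasDerivAt (fun y => ∑ i ∈ S1, a i * Real.log (y + d i))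
      (∑ i ∈ S1, a i / (z + d i)) z :=
    HasDerivAt.fun_sum fun i hi => term_log_plus a d i (hz1 i (Finset.mem_union_left _ hi))
  have H4 : HasDerivAt (fun y => ∑ i ∈ S4, a i * Real.log (y + d i))
      (∑ i ∈ S4, a i / (z + d i)) z :=
    HasDerivAt.fun_sum fun i hi => term_log_plus a d i (hz1 i (Finset.mem_union_right _ hi))
  have H2 : HasDerivAt (fun y => ∑ i ∈ S2, a i * Real.log (d i - y))
      (∑ i ∈ S2, -(a i / (d i - z))) z :=
    HasDerivAt.fun_sum fun i hi => term_log_minus a d i (hz2 i (Finset.mem_union_left _ hi))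
  have H3 : HasDerivAt (fun y => ∑ i ∈ S3, a i * Real.log (d i - y))
      (∑ i ∈ S3, -(a i / (d i - z))) z :=
    HasDerivAt.fun_sum fun i hi => term_log_minus a d i (hz2 i (Finset.mem_union_right _ hi))
  have := ((H1.sub H2).add H3).sub H4
  have e : ∑ i ∈ S1, a i / (z + d i) - ∑ i ∈ S2, -(a i / (d i - z))
      + ∑ i ∈ S3, -(a i / (d i - z)) - ∑ i ∈ S4, a i / (z + d i)
      = gDeriv S1 S2 S3 S4 a d z := by
    unfold gDeriv
    rw [Finset.sum_neg_distrib, Finset.sum_neg_distrib]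
    ring
  rw [e] at this
  exact this

include hz1 hz2 in
lemma hasDerivAt_gDeriv :
    HasDerivAt (gDeriv S1 S2 S3 S4 a d) (gD2 S1 S2 S3 S4 a d z) z := by
  have H1 : HasDerivAt (fun y => ∑ i ∈ S1, a i / (y + d i))
      (∑ i ∈ S1, -(a i / (z + d i) ^ 2)) z :=
    HasDerivAt.fun_sum fun i hi => term_inv_plus a d i (hz1 i (Finset.mem_union_left _ hi))
  have H4 : HasDerivAt (fun y => ∑ i ∈ S4, a i / (y + d i))
      (∑ i ∈ S4, -(a i / (z + d i) ^ 2)) z :=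
    HasDerivAt.fun_sum fun i hi => term_inv_plus a d i (hz1 i (Finset.mem_union_right _ hi))
  have H2 : HasDerivAt (fun y => ∑ i ∈ S2, a i / (d i - y))
      (∑ i ∈ S2, a i / (d i - z) ^ 2) z :=
    HasDerivAt.fun_sum fun i hi => term_inv_minus a d i (hz2 i (Finset.mem_union_left _ hi))
  have H3 : HasDerivAt (fun y => ∑ i ∈ S3, a i / (d i - y))
      (∑ i ∈ S3, a i / (d i - z) ^ 2) z :=
    HasDerivAt.fun_sum fun i hi => term_inv_minus a d i (hz2 i (Finset.mem_union_right _ hi))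
  have := ((H1.add H2).sub H3).sub H4
  have e : ∑ i ∈ S1, -(a i / (z + d i) ^ 2) + ∑ i ∈ S2, a i / (d i - z) ^ 2
      - ∑ i ∈ S3, a i / (d i - z) ^ 2 - ∑ i ∈ S4, -(a i / (z + d i) ^ 2)
      = gD2 S1 S2 S3 S4 a d z := by
    unfold gD2
    rw [Finset.sum_neg_distrib, Finset.sum_neg_distrib]
    ring
  rw [e] at this
  exact this

include hz1 hz2 in
lemma hasDerivAt_gD2 :
    HasDerivAt (gD2 S1 S2 S3 S4 a d) (gD3 S1 S2 S3 S4 a d z) z := by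
  have H1 : HasDerivAt (fun y => ∑ i ∈ S1, a i / (y + d i) ^ 2)
      (∑ i ∈ S1, -(2 * (a i / (z + d i) ^ 3))) z :=
    HasDerivAt.fun_sum fun i hi => term_sq_plus a d i (hz1 i (Finset.mem_union_left _ hi))
  have H4 : HasDerivAt (fun y => ∑ i ∈ S4, a i / (y + d i) ^ 2)
      (∑ i ∈ S4, -(2 * (a i / (z + d i) ^ 3))) z :=
    HasDerivAt.fun_sum fun i hi => term_sq_plus a d i (hz1 i (Finset.mem_union_right _ hi))
  have H2 : HasDerivAt (fun y => ∑ i ∈ S2, a i / (d i - y) ^ 2)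
      (∑ i ∈ S2, 2 * (a i / (d i - z) ^ 3)) z :=
    HasDerivAt.fun_sum fun i hi => term_sq_minus a d i (hz2 i (Finset.mem_union_left _ hi))
  have H3 : HasDerivAt (fun y => ∑ i ∈ S3, a i / (d i - y) ^ 2)
      (∑ i ∈ S3, 2 * (a i / (d i - z) ^ 3)) z :=
    HasDerivAt.fun_sum fun i hi => term_sq_minus a d i (hz2 i (Finset.mem_union_right _ hi))
  have := ((H4.sub H1).add (H2.sub H3))
  have e : ∑ i ∈ S4, -(2 * (a i / (z + d i) ^ 3)) - ∑ i ∈ S1, -(2 * (a i / (z + d i) ^ 3))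
      + (∑ i ∈ S2, 2 * (a i / (d i - z) ^ 3) - ∑ i ∈ S3, 2 * (a i / (d i - z) ^ 3))
      = gD3 S1 S2 S3 S4 a d z := by
    unfold gD3
    rw [Finset.sum_neg_distrib, Finset.sum_neg_distrib, ← Finset.mul_sum, ← Finset.mul_sum,
      ← Finset.mul_sum, ← Finset.mul_sum]
    ring
  rw [e] at this
  exact this

end derivs

section PW
variable {s : ℕ} {S1 S2 S3 S4 : Finset (Fin s)} {a d : Fin s → ℝ} {z : ℝ}

lemma pointwise_lemma
    (h14 : Disjoint S1 S4) (h23 : Disjoint S2 S3)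
    (hdinj : Function.Injective d)
    (ha : ∀ i, 0 < a i)
    (hS1 : S1.Nonempty) (hS2 : S2.Nonempty) (hS3 : S3.Nonempty) (hS4 : S4.Nonempty)
    (hcond4 : ∀ j ∈ S4, ∑ i ∈ S1, a i ≤ a j)
    (hcond3 : ∀ j ∈ S3, ∑ i ∈ S2, a i ≤ a j)
    (hz1 : ∀ i ∈ S1 ∪ S4, 0 < z + d i) (hz2 : ∀ i ∈ S2 ∪ S3, 0 < d i - z)
    (hge : 0 ≤ gDeriv S1 S2 S3 S4 a d z)
    (heq : gD2 S1 S2 S3 S4 a d z = 0) :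
    0 < gD3 S1 S2 S3 S4 a d z := by
  set X : Fin s → ℝ := fun i => (z + d i)⁻¹ with hX
  set Y : Fin s → ℝ := fun i => (d i - z)⁻¹ with hY
  have hXpos : ∀ i ∈ S1 ∪ S4, 0 < X i := fun i hi => inv_pos.2 (hz1 i hi)
  have hYpos : ∀ i ∈ S2 ∪ S3, 0 < Y i := fun i hi => inv_pos.2 (hz2 i hi)
  have hXne : ∀ i ∈ S1, ∀ j ∈ S4, X i ≠ X j := by
    intro i hi j hj hexy
    have hij : i ≠ j := fun hh => (Finset.disjoint_left.1 h14) hi (hh ▸ hj)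
    have h1 : z + d i = z + d j := by
      have := inv_injective hexy
      simpa [hX] using this
    exact hij (hdinj (by linarith))
  have hYne : ∀ i ∈ S2, ∀ j ∈ S3, Y i ≠ Y j := by
    intro i hi j hj hexy
    have hij : i ≠ j := fun hh => (Finset.disjoint_left.1 h23) hi (hh ▸ hj)
    have h1 : d i - z = d j - z := inv_injective hexy
    exact hij (hdinj (by linarith))
  -- rewrite sums
  have eX1 : ∀ (S : Finset (Fin s)) (k : ℕ), ∑ i ∈ S, a i / (z + d i) ^ k
      = ∑ i ∈ S, a i * X i ^ k := by
    intro S k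
    refine Finset.sum_congr rfl fun i _ => ?_
    rw [hX, div_eq_mul_inv, inv_pow]
  have eY1 : ∀ (S : Finset (Fin s)) (k : ℕ), ∑ i ∈ S, a i / (d i - z) ^ k
      = ∑ i ∈ S, a i * Y i ^ k := by
    intro S k
    refine Finset.sum_congr rfl fun i _ => ?_
    rw [hY, div_eq_mul_inv, inv_pow]
  have eX0 : ∀ (S : Finset (Fin s)), ∑ i ∈ S, a i / (z + d i) = ∑ i ∈ S, a i * X i := by
    intro S
    refine Finset.sum_congr rfl fun i _ => ?_
    rw [hX, div_eq_mul_inv]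
  have eY0 : ∀ (S : Finset (Fin s)), ∑ i ∈ S, a i / (d i - z) = ∑ i ∈ S, a i * Y i := by
    intro S
    refine Finset.sum_congr rfl fun i _ => ?_
    rw [hY, div_eq_mul_inv]
  rw [gDeriv, eX0 S1, eX0 S4, eY0 S2, eY0 S3] at hge
  rw [gD2, eX1 S1 2, eX1 S4 2, eY1 S2 2, eY1 S3 2] at heq
  rw [gD3, eX1 S1 3, eX1 S4 3, eY1 S2 3, eY1 S3 3]
  rcases le_or_gt (∑ i ∈ S4, a i * X i) (∑ i ∈ S1, a i * X i) with hu | hu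
  · have hu2 := keyStep1 hS1 hS4 ha hXpos hXne hcond4 hu
    have hv2 : ∑ i ∈ S3, a i * Y i ^ 2 ≤ ∑ i ∈ S2, a i * Y i ^ 2 := by linarith
    have hu3 := keyStep2 hS1 hS4 ha hXpos hXne hcond4 (le_of_lt hu2)
    have hv3 := keyStep2 hS2 hS3 ha hYpos hYne hcond3 hv2
    nlinarith
  · have hv1 : ∑ i ∈ S3, a i * Y i ≤ ∑ i ∈ S2, a i * Y i := by linarith
    have hv2 := keyStep1 hS2 hS3 ha hYpos hYne hcond3 hv1
    have hu2 : ∑ i ∈ S4, a i * X i ^ 2 ≤ ∑ i ∈ S1, a i * X i ^ 2 := by linarith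
    have hu3 := keyStep2 hS1 hS4 ha hXpos hXne hcond4 hu2
    have hv3 := keyStep2 hS2 hS3 ha hYpos hYne hcond3 (le_of_lt hv2)
    nlinarith
end PW

section NEC
variable {s : ℕ} {S1 S2 S3 S4 : Finset (Fin s)} {a d : Fin s → ℝ}

lemma nec_aux
    (h14 : Disjoint S1 S4) (h23 : Disjoint S2 S3)
    (hdinj : Function.Injective d) (ha : ∀ i, 0 < a i)
    (hS1 : S1.Nonempty) (hS2 : S2.Nonempty) (hS3 : S3.Nonempty) (hS4 : S4.Nonempty)
    (hcond4 : ∀ j ∈ S4, ∑ i ∈ S1, a i ≤ a j)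
    (hcond3 : ∀ j ∈ S3, ∑ i ∈ S2, a i ≤ a j)
    {K z₁ z₂ : ℝ} (hlt : z₁ < z₂)
    (hm1 : memI S1 S2 S3 S4 d z₁) (hm2 : memI S1 S2 S3 S4 d z₂)
    (hg1 : gFun S1 S2 S3 S4 a d z₁ = K) (hg2 : gFun S1 S2 S3 S4 a d z₂ = K)
    (hd1 : gDeriv S1 S2 S3 S4 a d z₁ < 0) (hd2 : gDeriv S1 S2 S3 S4 a d z₂ < 0) :
    False := by
  set g := gFun S1 S2 S3 S4 a d with hgdef
  set h := gDeriv S1 S2 S3 S4 a d with hhdef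
  set D2 := gD2 S1 S2 S3 S4 a d with hD2def
  set D3 := gD3 S1 S2 S3 S4 a d with hD3def
  have hmem : ∀ ζ ∈ Icc z₁ z₂,
      (∀ i ∈ S1 ∪ S4, 0 < ζ + d i) ∧ (∀ i ∈ S2 ∪ S3, 0 < d i - ζ) := by
    intro ζ hζ
    constructor
    · intro i hi; have := hm1.1 i hi; have := hζ.1; linarith
    · intro i hi; have := hm2.2 i hi; have := hζ.2; linarith
  have Hg : ∀ ζ ∈ Icc z₁ z₂, HasDerivAt g (h ζ) ζ := fun ζ hζ =>
    hasDerivAt_gFun S1 S2 S3 S4 a d (hmem ζ hζ).1 (hmem ζ hζ).2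
  have Hh : ∀ ζ ∈ Icc z₁ z₂, HasDerivAt h (D2 ζ) ζ := fun ζ hζ =>
    hasDerivAt_gDeriv S1 S2 S3 S4 a d (hmem ζ hζ).1 (hmem ζ hζ).2
  have HD2 : ∀ ζ ∈ Icc z₁ z₂, HasDerivAt D2 (D3 ζ) ζ := fun ζ hζ =>
    hasDerivAt_gD2 S1 S2 S3 S4 a d (hmem ζ hζ).1 (hmem ζ hζ).2
  have conth : ContinuousOn h (Icc z₁ z₂) := fun ζ hζ =>
    (Hh ζ hζ).continuousAt.continuousWithinAt
  have contD2 : ContinuousOn D2 (Icc z₁ z₂) := fun ζ hζ =>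
    (HD2 ζ hζ).continuousAt.continuousWithinAt
  have hz₁m : z₁ ∈ Icc z₁ z₂ := ⟨le_refl _, hlt.le⟩
  have hz₂m : z₂ ∈ Icc z₁ z₂ := ⟨hlt.le, le_refl _⟩
  -- Step A : there is u in (z₁,z₂) with 0 < h u
  have stepA : ∃ u ∈ Ioo z₁ z₂, 0 < h u := by
    by_contra hcon
    push_neg at hcon
    have hanti : AntitoneOn g (Icc z₁ z₂) := by
      apply antitoneOn_of_deriv_nonpos (convex_Icc z₁ z₂)
      · exact fun ζ hζ => (Hg ζ hζ).continuousAt.continuousWithinAt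
      · rw [interior_Icc]
        exact fun ζ hζ => (Hg ζ (Ioo_subset_Icc_self hζ)).differentiableAt.differentiableWithinAt
      · rw [interior_Icc]
        intro ζ hζ
        rw [(Hg ζ (Ioo_subset_Icc_self hζ)).deriv]
        exact hcon ζ hζ
    have hconst : ∀ ζ ∈ Icc z₁ z₂, g ζ = K := by
      intro ζ hζ
      have h1 : g ζ ≤ g z₁ := hanti hz₁m hζ hζ.1
      have h2 : g z₂ ≤ g ζ := hanti hζ hz₂m hζ.2
      rw [hg1] at h1; rw [hg2] at h2
      linarith
    have hev := slope_neg_right (Hg z₁ hz₁m) hd1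
    have hIoo : Ioo z₁ z₂ ∈ nhdsWithin z₁ (Set.Ioi z₁) :=
      Ioo_mem_nhdsGT_of_mem ⟨le_refl _, hlt⟩
    obtain ⟨y, hy1, hy2⟩ := (hev.and (eventually_of_mem hIoo fun y hy => hy)).exists
    rw [hconst y (Ioo_subset_Icc_self hy2), hg1] at hy1
    exact lt_irrefl _ hy1
  obtain ⟨u, huIoo, hupos⟩ := stepA
  have huIcc : u ∈ Icc z₁ z₂ := Ioo_subset_Icc_self huIoo
  -- Step B : r
  have hCr : IsClosed (Icc z₁ u ∩ h ⁻¹' Iic 0) :=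
    (conth.mono (Icc_subset_Icc_right huIoo.2.le)).preimage_isClosed_of_isClosed
      isClosed_Icc isClosed_Iic
  have hCrne : (Icc z₁ u ∩ h ⁻¹' Iic 0).Nonempty :=
    ⟨z₁, ⟨⟨le_refl _, huIoo.1.le⟩, hd1.le⟩⟩
  have hCrbdd : BddAbove (Icc z₁ u ∩ h ⁻¹' Iic 0) := ⟨u, fun x hx => hx.1.2⟩
  set r := sSup (Icc z₁ u ∩ h ⁻¹' Iic 0) with hrdef
  have hrmem := hCr.csSup_mem hCrne hCrbdd
  have hrIcc : r ∈ Icc z₁ u := hrmem.1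
  have hrle : h r ≤ 0 := hrmem.2
  have hrm : r ∈ Icc z₁ z₂ := ⟨hrIcc.1, hrIcc.2.trans huIoo.2.le⟩
  have hru : r < u := lt_of_le_of_ne hrIcc.2 (fun hh => by rw [hh] at hrle; linarith)
  have hposIoc : ∀ ζ ∈ Ioc r u, 0 < h ζ := by
    intro ζ hζ
    by_contra hcon
    push_neg at hcon
    have : ζ ≤ r := le_csSup hCrbdd ⟨⟨hrIcc.1.trans hζ.1.le, hζ.2⟩, hcon⟩
    exact absurd hζ.1 (not_lt.2 this)
  have hr0 : h r = 0 := by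
    refine le_antisymm hrle ?_
    by_contra hcon
    push_neg at hcon
    have hten : Tendsto h (nhds r) (nhds (h r)) := (Hh r hrm).continuousAt
    have hev : ∀ᶠ y in nhdsWithin r (Set.Ioi r), h y < 0 :=
      (hten.eventually_lt_const hcon).filter_mono nhdsWithin_le_nhds
    have hIoc : Ioc r u ∈ nhdsWithin r (Set.Ioi r) :=
      Ioc_mem_nhdsGT_of_mem ⟨le_refl _, hru⟩
    obtain ⟨y, hy1, hy2⟩ := (hev.and (eventually_of_mem hIoc fun y hy => hy)).exists
    exact absurd (hposIoc y hy2) (not_lt.2 hy1.le)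
  have hD2r : 0 ≤ D2 r := by
    by_contra hcon
    push_neg at hcon
    have hev := slope_neg_right (Hh r hrm) hcon
    have hIoc : Ioc r u ∈ nhdsWithin r (Set.Ioi r) :=
      Ioc_mem_nhdsGT_of_mem ⟨le_refl _, hru⟩
    obtain ⟨y, hy1, hy2⟩ := (hev.and (eventually_of_mem hIoc fun y hy => hy)).exists
    rw [hr0] at hy1
    exact absurd (hposIoc y hy2) (not_lt.2 hy1.le)
  -- Step C : t
  have hCt : IsClosed (Icc u z₂ ∩ h ⁻¹' Iic 0) :=
    (conth.mono (Icc_subset_Icc_left huIoo.1.le)).preimage_isClosed_of_isClosed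
      isClosed_Icc isClosed_Iic
  have hCtne : (Icc u z₂ ∩ h ⁻¹' Iic 0).Nonempty :=
    ⟨z₂, ⟨⟨huIoo.2.le, le_refl _⟩, hd2.le⟩⟩
  have hCtbdd : BddBelow (Icc u z₂ ∩ h ⁻¹' Iic 0) := ⟨u, fun x hx => hx.1.1⟩
  set t := sInf (Icc u z₂ ∩ h ⁻¹' Iic 0) with htdef
  have htmem := hCt.csInf_mem hCtne hCtbdd
  have htIcc : t ∈ Icc u z₂ := htmem.1
  have htle : h t ≤ 0 := htmem.2
  have htm : t ∈ Icc z₁ z₂ := ⟨huIoo.1.le.trans htIcc.1, htIcc.2⟩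
  have hut : u < t := lt_of_le_of_ne htIcc.1 (fun hh => by rw [hh] at hupos; linarith)
  have hposIco : ∀ ζ ∈ Ico u t, 0 < h ζ := by
    intro ζ hζ
    by_contra hcon
    push_neg at hcon
    have : t ≤ ζ := csInf_le hCtbdd ⟨⟨hζ.1, hζ.2.le.trans htIcc.2⟩, hcon⟩
    exact absurd hζ.2 (not_lt.2 this)
  have ht0 : h t = 0 := by
    refine le_antisymm htle ?_
    by_contra hcon
    push_neg at hcon
    have hten : Tendsto h (nhds t) (nhds (h t)) := (Hh t htm).continuousAt
    have hev : ∀ᶠ y in nhdsWithin t (Set.Iio t), h y < 0 :=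
      (hten.eventually_lt_const hcon).filter_mono nhdsWithin_le_nhds
    have hIoo : Ioo u t ∈ nhdsWithin t (Set.Iio t) :=
      Ioo_mem_nhdsLT_of_mem ⟨hut, le_refl _⟩
    obtain ⟨y, hy1, hy2⟩ := (hev.and (eventually_of_mem hIoo fun y hy => hy)).exists
    exact absurd (hposIco y (Ioo_subset_Ico_self hy2)) (not_lt.2 hy1.le)
  have hD2t : D2 t ≤ 0 := by
    by_contra hcon
    push_neg at hcon
    have hev := slope_pos_left (Hh t htm) hcon
    have hIoo : Ioo u t ∈ nhdsWithin t (Set.Iio t) :=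
      Ioo_mem_nhdsLT_of_mem ⟨hut, le_refl _⟩
    obtain ⟨y, hy1, hy2⟩ := (hev.and (eventually_of_mem hIoo fun y hy => hy)).exists
    rw [ht0] at hy1
    exact absurd (hposIco y (Ioo_subset_Ico_self hy2)) (not_lt.2 hy1.le)
  have hrt : r < t := hru.trans hut
  have hrtsub : Icc r t ⊆ Icc z₁ z₂ := Icc_subset_Icc hrm.1 htm.2
  have hnonneg : ∀ ζ ∈ Icc r t, 0 ≤ h ζ := by
    intro ζ hζ
    rcases le_or_gt ζ u with hc | hc
    · rcases hζ.1.eq_or_lt with he | hlt'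
      · rw [← he, hr0]
      · exact (hposIoc ζ ⟨hlt', hc⟩).le
    · rcases hζ.2.eq_or_lt with he | hlt'
      · rw [he, ht0]
      · exact (hposIco ζ ⟨hc.le, hlt'⟩).le
  -- the local pointwise contradiction machine
  have PW : ∀ w ∈ Icc r t, D2 w = 0 → 0 < D3 w := by
    intro w hw hw0
    exact pointwise_lemma h14 h23 hdinj ha hS1 hS2 hS3 hS4 hcond4 hcond3
      (hmem w (hrtsub hw)).1 (hmem w (hrtsub hw)).2 (hnonneg w hw) hw0
  by_cases hall : ∀ ζ ∈ Ioo r t, D2 ζ ≤ 0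
  · -- h is antitone on [r,t], hence ≡ 0 there
    have hantih : AntitoneOn h (Icc r t) := by
      apply antitoneOn_of_deriv_nonpos (convex_Icc r t) (conth.mono hrtsub)
      · rw [interior_Icc]
        exact fun ζ hζ =>
          (Hh ζ (hrtsub (Ioo_subset_Icc_self hζ))).differentiableAt.differentiableWithinAt
      · rw [interior_Icc]
        intro ζ hζ
        rw [(Hh ζ (hrtsub (Ioo_subset_Icc_self hζ))).deriv]
        exact hall ζ hζ
    have hzero : ∀ ζ ∈ Icc r t, h ζ = 0 := by
      intro ζ hζ
      refine le_antisymm ?_ (hnonneg ζ hζ)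
      have := hantih (left_mem_Icc.2 hrt.le) hζ hζ.1
      rw [hr0] at this
      exact this
    set ζ₀ := (r + t) / 2 with hζ₀def
    have hζ₀ : ζ₀ ∈ Ioo r t := ⟨by linarith, by linarith⟩
    have hloc : ∀ y ∈ Ioo r t, h =ᶠ[nhds y] fun _ => 0 := by
      intro y hy
      filter_upwards [Ioo_mem_nhds hy.1 hy.2] with x hx
      exact hzero x (Ioo_subset_Icc_self hx)
    have hD2zero : ∀ y ∈ Ioo r t, D2 y = 0 := by
      intro y hy
      have h1 : HasDerivAt h 0 y :=
        (hasDerivAt_const y (0:ℝ)).congr_of_eventuallyEq (hloc y hy)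
      exact (Hh y (hrtsub (Ioo_subset_Icc_self hy))).unique h1
    have hD3 := PW ζ₀ (Ioo_subset_Icc_self hζ₀) (hD2zero ζ₀ hζ₀)
    have hev := slope_pos_left (HD2 ζ₀ (hrtsub (Ioo_subset_Icc_self hζ₀))) hD3
    have hIoo : Ioo r ζ₀ ∈ nhdsWithin ζ₀ (Set.Iio ζ₀) :=
      Ioo_mem_nhdsLT_of_mem ⟨hζ₀.1, le_refl _⟩
    obtain ⟨y, hy1, hy2⟩ := (hev.and (eventually_of_mem hIoo fun y hy => hy)).exists
    rw [hD2zero ζ₀ hζ₀] at hy1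
    have : D2 y = 0 := hD2zero y ⟨hy2.1, hy2.2.trans hζ₀.2⟩
    rw [this] at hy1
    exact lt_irrefl _ hy1
  · push_neg at hall
    obtain ⟨m, hmIoo, hD2m⟩ := hall
    have hmt : m < t := hmIoo.2
    have hCw : IsClosed (Icc m t ∩ D2 ⁻¹' Iic 0) :=
      (contD2.mono (Icc_subset_Icc (hrm.1.trans hmIoo.1.le) htm.2)).preimage_isClosed_of_isClosed
        isClosed_Icc isClosed_Iic
    have hCwne : (Icc m t ∩ D2 ⁻¹' Iic 0).Nonempty := ⟨t, ⟨⟨hmt.le, le_refl _⟩, hD2t⟩⟩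
    have hCwbdd : BddBelow (Icc m t ∩ D2 ⁻¹' Iic 0) := ⟨m, fun x hx => hx.1.1⟩
    set w := sInf (Icc m t ∩ D2 ⁻¹' Iic 0) with hwdef
    have hwmem := hCw.csInf_mem hCwne hCwbdd
    have hwIcc : w ∈ Icc m t := hwmem.1
    have hwle : D2 w ≤ 0 := hwmem.2
    have hmw : m < w := lt_of_le_of_ne hwIcc.1 (fun hh => by rw [← hh] at hwle; linarith)
    have hwrt : w ∈ Icc r t := ⟨hmIoo.1.le.trans hwIcc.1, hwIcc.2⟩
    have hwm : w ∈ Icc z₁ z₂ := hrtsub hwrt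
    have hD2pos : ∀ ζ ∈ Ico m w, 0 < D2 ζ := by
      intro ζ hζ
      by_contra hcon
      push_neg at hcon
      have : w ≤ ζ := csInf_le hCwbdd ⟨⟨hζ.1, hζ.2.le.trans hwIcc.2⟩, hcon⟩
      exact absurd hζ.2 (not_lt.2 this)
    have hw0 : D2 w = 0 := by
      refine le_antisymm hwle ?_
      by_contra hcon
      push_neg at hcon
      have hten : Tendsto D2 (nhds w) (nhds (D2 w)) := (HD2 w hwm).continuousAt
      have hev : ∀ᶠ y in nhdsWithin w (Set.Iio w), D2 y < 0 :=
        (hten.eventually_lt_const hcon).filter_mono nhdsWithin_le_nhds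
      have hIco : Ico m w ∈ nhdsWithin w (Set.Iio w) :=
        Ico_mem_nhdsLT_of_mem ⟨hmw, le_refl _⟩
      obtain ⟨y, hy1, hy2⟩ := (hev.and (eventually_of_mem hIco fun y hy => hy)).exists
      exact absurd (hD2pos y hy2) (not_lt.2 hy1.le)
    have hD3 := PW w hwrt hw0
    have hev := slope_pos_left (HD2 w hwm) hD3
    have hIco : Ico m w ∈ nhdsWithin w (Set.Iio w) :=
      Ico_mem_nhdsLT_of_mem ⟨hmw, le_refl _⟩
    obtain ⟨y, hy1, hy2⟩ := (hev.and (eventually_of_mem hIco fun y hy => hy)).exists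
    rw [hw0] at hy1
    exact absurd (hD2pos y hy2) (not_lt.2 hy1.le)
end NEC


lemma necessity {s : ℕ} {S1 S2 S3 S4 : Finset (Fin s)} {a : Fin s → ℝ}
    (h14 : Disjoint S1 S4) (h23 : Disjoint S2 S3)
    (ha : ∀ i, 0 < a i)
    (hS1 : S1.Nonempty) (hS2 : S2.Nonempty) (hS3 : S3.Nonempty) (hS4 : S4.Nonempty)
    (hcond4 : ∀ j ∈ S4, ∑ i ∈ S1, a i ≤ a j)
    (hcond3 : ∀ j ∈ S3, ∑ i ∈ S2, a i ≤ a j) :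
    ¬ MultistabCriterion S1 S2 S3 S4 a := by
  rintro ⟨d, hdinj, K, z₁, z₂, hne, hm1, hm2, hg1, hg2, hd1, hd2⟩
  rcases hne.lt_or_gt with h | h
  · exact nec_aux h14 h23 hdinj ha hS1 hS2 hS3 hS4 hcond4 hcond3 h hm1 hm2 hg1 hg2 hd1 hd2
  · exact nec_aux h14 h23 hdinj ha hS1 hS2 hS3 hS4 hcond4 hcond3 h hm2 hm1 hg2 hg1 hd2 hd1

section swap
variable {s : ℕ} {S1 S2 S3 S4 : Finset (Fin s)} {a d : Fin s → ℝ}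

lemma gFun_swap (z : ℝ) :
    gFun S2 S1 S4 S3 a d (-z) = -(gFun S1 S2 S3 S4 a d z) := by
  unfold gFun
  have e1 : ∀ S : Finset (Fin s), ∑ i ∈ S, a i * Real.log (-z + d i)
      = ∑ i ∈ S, a i * Real.log (d i - z) :=
    fun S => Finset.sum_congr rfl fun i _ => by rw [neg_add_eq_sub]
  have e2 : ∀ S : Finset (Fin s), ∑ i ∈ S, a i * Real.log (d i - -z)
      = ∑ i ∈ S, a i * Real.log (z + d i) :=
    fun S => Finset.sum_congr rfl fun i _ => by rw [sub_neg_eq_add, add_comm]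
  rw [e1 S2, e1 S3, e2 S1, e2 S4]
  ring

lemma gDeriv_swap (z : ℝ) :
    gDeriv S2 S1 S4 S3 a d (-z) = gDeriv S1 S2 S3 S4 a d z := by
  unfold gDeriv
  have e1 : ∀ S : Finset (Fin s), ∑ i ∈ S, a i / (-z + d i)
      = ∑ i ∈ S, a i / (d i - z) :=
    fun S => Finset.sum_congr rfl fun i _ => by rw [neg_add_eq_sub]
  have e2 : ∀ S : Finset (Fin s), ∑ i ∈ S, a i / (d i - -z)
      = ∑ i ∈ S, a i / (z + d i) :=
    fun S => Finset.sum_congr rfl fun i _ => by rw [sub_neg_eq_add, add_comm]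
  rw [e1 S2, e1 S3, e2 S1, e2 S4]
  ring

lemma crit_swap {a : Fin s → ℝ} (h : MultistabCriterion S1 S2 S3 S4 a) :
    MultistabCriterion S2 S1 S4 S3 a := by
  obtain ⟨d, hdinj, K, z₁, z₂, hne, hm1, hm2, hg1, hg2, hd1, hd2⟩ := h
  refine ⟨d, hdinj, -K, -z₁, -z₂, by simpa using hne, ?_, ?_, ?_, ?_, ?_, ?_⟩
  · exact ⟨fun i hi => by have := hm1.2 i hi; linarith,
      fun i hi => by have := hm1.1 i hi; linarith⟩
  · exact ⟨fun i hi => by have := hm2.2 i hi; linarith,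
      fun i hi => by have := hm2.1 i hi; linarith⟩
  · rw [gFun_swap, hg1]
  · rw [gFun_swap, hg2]
  · rw [gDeriv_swap]; exact hd1
  · rw [gDeriv_swap]; exact hd2
end swap

set_option maxHeartbeats 2000000 in
lemma sufficiency {s : ℕ} (S1 S2 S3 S4 : Finset (Fin s))
    (h12 : Disjoint S1 S2) (h13 : Disjoint S1 S3) (h14 : Disjoint S1 S4)
    (h23 : Disjoint S2 S3) (h24 : Disjoint S2 S4) (h34 : Disjoint S3 S4)
    (a : Fin s → ℝ) (ha : ∀ i, 0 < a i)
    (hS1 : S1.Nonempty) (hS3 : S3.Nonempty) (hS4 : S4.Nonempty)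
    (hlt : S4.inf' hS4 a < ∑ i ∈ S1, a i) :
    MultistabCriterion S1 S2 S3 S4 a := by
  classical
  obtain ⟨k, hk, hak⟩ := S4.exists_mem_eq_inf' hS4 a
  obtain ⟨m, hm⟩ := hS3
  have hs0 : 0 < (s : ℝ) := by exact_mod_cast k.pos
  set A : ℝ := ∑ i ∈ S1, a i with hAdef
  set b : ℝ := a k with hbdef
  have hbA : b < A := hak ▸ hlt
  have hA0 : 0 < A := Finset.sum_pos (fun i _ => ha i) hS1
  have hb0 : 0 < b := ha k
  set am : ℝ := a m with hamdef
  have ham0 : 0 < am := ha m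
  set Sa : ℝ := ∑ i : Fin s, a i with hSadef
  have hSaA : A ≤ Sa := Finset.sum_le_univ_sum_of_nonneg (fun i => (ha i).le)
  have hSa0 : 0 < Sa := lt_of_lt_of_le hA0 hSaA
  set M : ℝ := 2 * Sa + 4 with hMdef
  have hM4 : 4 ≤ M := by nlinarith
  have hM0 : 0 < M := by linarith
  set δ : ℝ := min (1/2) (am / (4 * A + 4)) with hδdef
  have hδ0 : 0 < δ := lt_min (by norm_num) (by positivity)
  have hδh : δ ≤ 1/2 := min_le_left _ _
  have hδa : δ ≤ am / (4 * A + 4) := min_le_right _ _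
  set E : ℝ := A * Real.log (1/2) + am * Real.log δ - Sa * Real.log (2*M+1)
      - 2 * Sa * Real.log (2*M) - A * Real.log 3 + b * Real.log (b / (2*A+2)) with hEdef
  set ε : ℝ := min (1/4) (Real.exp ((E - 1) / (A - b))) with hεdef
  have hε0 : 0 < ε := lt_min (by norm_num) (Real.exp_pos _)
  have hε4 : ε ≤ 1/4 := min_le_left _ _
  have hεE : Real.log ε ≤ (E - 1) / (A - b) := by
    calc Real.log ε ≤ Real.log (Real.exp ((E - 1) / (A - b))) :=
          Real.log_le_log hε0 (min_le_right _ _)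
      _ = (E - 1) / (A - b) := Real.log_exp _
  set r₁ : ℝ := ε * b / (2 * A + 2) with hr₁def
  have hr₁0 : 0 < r₁ := by positivity
  have hr₁ε : r₁ ≤ ε / 2 := by
    rw [hr₁def, div_le_div_iff₀ (by positivity) (by norm_num)]
    nlinarith
  have hbr₁ : b / r₁ = (2 * A + 2) / ε := by
    rw [hr₁def]
    field_simp
  clear_value δ E ε r₁
  -- the deformation vector
  set d : Fin s → ℝ := fun i =>
    if i = k then 0
    else if i ∈ S1 then ε * (1 + ((i : ℕ) + 1) / (2 * (s:ℝ)))
    else if i = m then 1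
    else M * (1 + ((i : ℕ) + 1) / (s:ℝ)) with hddef
  have hfrac : ∀ i : Fin s, 0 < (((i : ℕ) : ℝ) + 1) / (s:ℝ)
      ∧ (((i : ℕ) : ℝ) + 1) / (s:ℝ) ≤ 1 := by
    intro i
    have h1 : ((i : ℕ) : ℝ) + 1 ≤ (s : ℝ) := by
      have := i.isLt
      exact_mod_cast Nat.succ_le_of_lt this
    constructor
    · positivity
    · rw [div_le_one hs0]; exact h1
  have hmk : m ≠ k := fun hh => (Finset.disjoint_left.1 h34) hm (hh ▸ hk)
  have hmS1 : m ∉ S1 := fun hh => (Finset.disjoint_left.1 h13) hh hm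
  have hdk : d k = 0 := by simp [hddef]
  have hdm : d m = 1 := by simp [hddef, hmk, hmS1]
  have hdS1 : ∀ i ∈ S1, d i = ε * (1 + ((i : ℕ) + 1) / (2 * (s:ℝ))) := by
    intro i hi
    have hik : i ≠ k := fun hh => (Finset.disjoint_left.1 h14) hi (hh ▸ hk)
    simp [hddef, hik, hi]
  have hdpark : ∀ i : Fin s, i ≠ k → i ∉ S1 → i ≠ m →
      d i = M * (1 + ((i : ℕ) + 1) / (s:ℝ)) := by
    intro i h1 h2 h3
    simp [hddef, h1, h2, h3]
  clear_value d
  clear hddef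
  -- range bounds
  have hS1bound : ∀ i ∈ S1, ε < d i ∧ d i ≤ 2 * ε := by
    intro i hi
    rw [hdS1 i hi]
    push_cast
    have h1 : ((i : ℕ) : ℝ) + 1 ≤ (s : ℝ) := by
      exact_mod_cast Nat.succ_le_of_lt i.isLt
    have h2 : 0 < (((i : ℕ) : ℝ) + 1) := by positivity
    have hq1 : 0 < (((i : ℕ) : ℝ) + 1) / (2 * (s:ℝ)) :=
      div_pos h2 (by positivity)
    have h3 : (((i : ℕ) : ℝ) + 1) / (2 * (s:ℝ)) ≤ 1/2 := by
      rw [div_le_div_iff₀ (by positivity) (by norm_num)]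
      nlinarith
    constructor
    · have h4 : ε * 1 < ε * (1 + (((i : ℕ) : ℝ) + 1) / (2 * (s:ℝ))) :=
        mul_lt_mul_of_pos_left (by linarith) hε0
      linarith
    · have h4 : ε * (1 + (((i : ℕ) : ℝ) + 1) / (2 * (s:ℝ))) ≤ ε * 2 :=
        mul_le_mul_of_nonneg_left (by linarith) hε0.le
      linarith
  have hparkbound : ∀ i : Fin s, i ≠ k → i ∉ S1 → i ≠ m →
      M < d i ∧ d i ≤ 2 * M := by
    intro i h1 h2 h3
    rw [hdpark i h1 h2 h3]
    push_cast
    obtain ⟨hq1, hq2⟩ := hfrac i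
    constructor
    · have h4 : M * 1 < M * (1 + (((i : ℕ) : ℝ) + 1) / (s:ℝ)) :=
        mul_lt_mul_of_pos_left (by linarith) hM0
      linarith
    · have h4 : M * (1 + (((i : ℕ) : ℝ) + 1) / (s:ℝ)) ≤ M * 2 :=
        mul_le_mul_of_nonneg_left (by linarith) hM0.le
      linarith
  -- parked classification
  have hparkS4 : ∀ i ∈ S4.erase k, i ≠ k ∧ i ∉ S1 ∧ i ≠ m := by
    intro i hi
    have h1 := Finset.ne_of_mem_erase hi
    have h4 := Finset.mem_of_mem_erase hi
    exact ⟨h1, fun hh => (Finset.disjoint_left.1 h14.symm) h4 hh,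
      fun hh => (Finset.disjoint_left.1 h34 hm) (hh ▸ h4)⟩
  have hparkS2 : ∀ i ∈ S2, i ≠ k ∧ i ∉ S1 ∧ i ≠ m := by
    intro i hi
    exact ⟨fun hh => (Finset.disjoint_left.1 h24 hi) (hh ▸ hk),
      fun hh => (Finset.disjoint_left.1 h12 hh) hi,
      fun hh => (Finset.disjoint_left.1 h23 hi) (hh ▸ hm)⟩
  have hparkS3 : ∀ i ∈ S3.erase m, i ≠ k ∧ i ∉ S1 ∧ i ≠ m := by
    intro i hi
    have h3' := Finset.mem_of_mem_erase hi
    exact ⟨fun hh => (Finset.disjoint_left.1 h34 h3') (hh ▸ hk),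
      fun hh => (Finset.disjoint_left.1 h13 hh) h3',
      Finset.ne_of_mem_erase hi⟩
  have hd0 : ∀ i, 0 ≤ d i := by
    intro i
    by_cases h1 : i = k
    · rw [h1, hdk]
    · by_cases h2 : i ∈ S1
      · exact (lt_trans hε0 (hS1bound i h2).1).le
      · by_cases h3 : i = m
        · rw [h3, hdm]; norm_num
        · exact (lt_trans hM0 (hparkbound i h1 h2 h3).1).le
  have hd1S23 : ∀ i ∈ S2 ∪ S3, 1 ≤ d i := by
    intro i hi
    rcases Finset.mem_union.1 hi with h2 | h3
    · obtain ⟨p1, p2, p3⟩ := hparkS2 i h2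
      have := (hparkbound i p1 p2 p3).1
      linarith
    · by_cases hmm' : i = m
      · rw [hmm', hdm]
      · obtain ⟨p1, p2, p3⟩ := hparkS3 i (Finset.mem_erase.2 ⟨hmm', h3⟩)
        have := (hparkbound i p1 p2 p3).1
        linarith
  have hs0' : (2 * (s:ℝ)) ≠ 0 := by positivity
  have hdinj : Function.Injective d := by
    intro i j hij
    by_cases hik : i = k <;> by_cases hjk : j = k
    · rw [hik, hjk]
    · exfalso
      rw [hik, hdk] at hij
      by_cases hj1 : j ∈ S1
      · have := (hS1bound j hj1).1; linarith
      · by_cases hjm : j = m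
        · rw [hjm, hdm] at hij; norm_num at hij
        · have := (hparkbound j hjk hj1 hjm).1; linarith
    · exfalso
      rw [hjk, hdk] at hij
      by_cases hi1 : i ∈ S1
      · have := (hS1bound i hi1).1; linarith
      · by_cases him : i = m
        · rw [him, hdm] at hij; norm_num at hij
        · have := (hparkbound i hik hi1 him).1; linarith
    · by_cases hi1 : i ∈ S1 <;> by_cases hj1 : j ∈ S1
      · rw [hdS1 i hi1, hdS1 j hj1] at hij
        have h5 := mul_left_cancel₀ (ne_of_gt hε0) hij
        have h6 : (((i:ℕ):ℝ) + 1) / (2 * (s:ℝ)) = (((j:ℕ):ℝ) + 1) / (2 * (s:ℝ)) := by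
          linarith
        rw [div_eq_div_iff (by positivity) (by positivity)] at h6
        have h7 : ((i:ℕ):ℝ) = ((j:ℕ):ℝ) := by
          have hss : (0:ℝ) < 2 * (s:ℝ) := by positivity
          nlinarith
        exact Fin.ext (by exact_mod_cast h7)
      · exfalso
        have hi' := hS1bound i hi1
        by_cases hjm : j = m
        · rw [hjm, hdm] at hij; linarith [hi'.2]
        · have := (hparkbound j hjk hj1 hjm).1; linarith [hi'.2]
      · exfalso
        have hj' := hS1bound j hj1
        by_cases him : i = m
        · rw [him, hdm] at hij; linarith [hj'.2]
        · have := (hparkbound i hik hi1 him).1; linarith [hj'.2]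
      · by_cases him : i = m <;> by_cases hjm : j = m
        · rw [him, hjm]
        · exfalso
          rw [him, hdm] at hij
          have := (hparkbound j hjk hj1 hjm).1; linarith
        · exfalso
          rw [hjm, hdm] at hij
          have := (hparkbound i hik hi1 him).1; linarith
        · rw [hdpark i hik hi1 him, hdpark j hjk hj1 hjm] at hij
          have h5 := mul_left_cancel₀ (ne_of_gt hM0) hij
          have h6 : (((i:ℕ):ℝ) + 1) / ((s:ℝ)) = (((j:ℕ):ℝ) + 1) / ((s:ℝ)) := by
            linarith
          rw [div_eq_div_iff (ne_of_gt hs0) (ne_of_gt hs0)] at h6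
          have h7 : ((i:ℕ):ℝ) = ((j:ℕ):ℝ) := by nlinarith
          exact Fin.ext (by exact_mod_cast h7)
  -- helper sum bounds
  have sum_div_le : ∀ (T : Finset (Fin s)) (x : Fin s → ℝ) (C : ℝ), 0 < C →
      (∀ i ∈ T, C ≤ x i) → ∑ i ∈ T, a i / x i ≤ (∑ i ∈ T, a i) / C := by
    intro T x C hC hx
    rw [Finset.sum_div]
    apply Finset.sum_le_sum
    intro i hi
    exact div_le_div_of_nonneg_left (ha i).le hC (hx i hi)
  have sum_mul_le : ∀ (T : Finset (Fin s)) (f : Fin s → ℝ) (C : ℝ),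
      (∀ i ∈ T, f i ≤ C) → ∑ i ∈ T, a i * f i ≤ (∑ i ∈ T, a i) * C := by
    intro T f C hf
    rw [Finset.sum_mul]
    exact Finset.sum_le_sum fun i hi => mul_le_mul_of_nonneg_left (hf i hi) (ha i).le
  have sum_mul_ge : ∀ (T : Finset (Fin s)) (f : Fin s → ℝ) (C : ℝ),
      (∀ i ∈ T, C ≤ f i) → (∑ i ∈ T, a i) * C ≤ ∑ i ∈ T, a i * f i := by
    intro T f C hf
    rw [Finset.sum_mul]
    exact Finset.sum_le_sum fun i hi => mul_le_mul_of_nonneg_left (hf i hi) (ha i).le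
  have subSa : ∀ T : Finset (Fin s), ∑ i ∈ T, a i ≤ Sa :=
    fun T => Finset.sum_le_univ_sum_of_nonneg fun i => (ha i).le
  have sumTnn : ∀ T : Finset (Fin s), 0 ≤ ∑ i ∈ T, a i :=
    fun T => Finset.sum_nonneg fun i _ => (ha i).le
  have hr₁small : r₁ ≤ 1/8 := by linarith
  -- F1 : derivative negative on (0, r₁]
  have F1 : ∀ z : ℝ, 0 < z → z ≤ r₁ → gDeriv S1 S2 S3 S4 a d z < 0 := by
    intro z hz hzr
    have hzlt1 : z < 1 := by linarith
    unfold gDeriv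
    have e1 : ∑ i ∈ S1, a i / (z + d i) ≤ A / ε := by
      have := sum_div_le S1 (fun i => z + d i) ε hε0
        (fun i hi => by have := (hS1bound i hi).1; show ε ≤ z + d i; linarith)
      rw [← hAdef] at this
      exact this
    have e2 : ∑ i ∈ S2, a i / (d i - z) ≤ 1 := by
      have h5 : ∀ i ∈ S2, M - 1 ≤ d i - z := by
        intro i hi
        obtain ⟨p1, p2, p3⟩ := hparkS2 i hi
        have := (hparkbound i p1 p2 p3).1
        linarith
      have h6 := sum_div_le S2 (fun i => d i - z) (M - 1) (by linarith) h5
      have h7 : (∑ i ∈ S2, a i) / (M - 1) ≤ Sa / (M - 1) :=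
        (div_le_div_iff_of_pos_right (by linarith)).2 (subSa S2)
      have h8 : Sa / (M - 1) ≤ 1 := by
        rw [div_le_one (by linarith)]
        linarith
      calc ∑ i ∈ S2, a i / (d i - z) ≤ (∑ i ∈ S2, a i) / (M - 1) := h6
        _ ≤ Sa / (M - 1) := h7
        _ ≤ 1 := h8
    have e3 : 0 ≤ ∑ i ∈ S3, a i / (d i - z) := Finset.sum_nonneg fun i hi =>
      div_nonneg (ha i).le
        (by have := hd1S23 i (Finset.mem_union_right _ hi); linarith)
    have e4 : b / z ≤ ∑ i ∈ S4, a i / (z + d i) := by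
      have h5 : a k / (z + d k) + ∑ i ∈ S4.erase k, a i / (z + d i)
          = ∑ i ∈ S4, a i / (z + d i) :=
        Finset.add_sum_erase S4 (fun i => a i / (z + d i)) hk
      have h6 : 0 ≤ ∑ i ∈ S4.erase k, a i / (z + d i) := Finset.sum_nonneg fun i hi =>
        div_nonneg (ha i).le (by have := hd0 i; linarith)
      rw [hdk] at h5
      rw [← hbdef] at h5
      have h7 : b / (z + 0) = b / z := by norm_num
      rw [h7] at h5
      linarith
    have e5 : (2 * A + 2) / ε ≤ b / z := by
      rw [← hbr₁]
      exact div_le_div_of_nonneg_left hb0.le hz hzr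
    have e7 : 4 * (A + 2) ≤ (A + 2) * (1 / ε) := by
      have h9 : (4:ℝ) ≤ 1 / ε := by
        rw [le_div_iff₀ hε0]
        linarith
      nlinarith
    have e8 : (2 * A + 2) / ε = A / ε + (A + 2) / ε := by
      field_simp
      ring
    have e9 : (A + 2) / ε = (A + 2) * (1 / ε) := by ring
    linarith
  -- F2 : derivative negative at r₂ = 1 - δ
  set r₂ : ℝ := 1 - δ with hr₂def
  have hr₂half : 1/2 ≤ r₂ := by rw [hr₂def]; linarith
  have hr₂lt1 : r₂ < 1 := by rw [hr₂def]; linarith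
  have hr₂pos : 0 < r₂ := by linarith
  have F2 : gDeriv S1 S2 S3 S4 a d r₂ < 0 := by
    unfold gDeriv
    have e1 : ∑ i ∈ S1, a i / (r₂ + d i) ≤ A / (1/2) := by
      have := sum_div_le S1 (fun i => r₂ + d i) (1/2) (by norm_num)
        (fun i hi => by have := hd0 i; show 1/2 ≤ r₂ + d i; linarith)
      rw [← hAdef] at this
      exact this
    have e2 : ∑ i ∈ S2, a i / (d i - r₂) ≤ 1 := by
      have h5 : ∀ i ∈ S2, M - 1 ≤ d i - r₂ := by
        intro i hi
        obtain ⟨p1, p2, p3⟩ := hparkS2 i hi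
        have := (hparkbound i p1 p2 p3).1
        linarith
      have h6 := sum_div_le S2 (fun i => d i - r₂) (M - 1) (by linarith) h5
      have h7 : (∑ i ∈ S2, a i) / (M - 1) ≤ Sa / (M - 1) :=
        (div_le_div_iff_of_pos_right (by linarith)).2 (subSa S2)
      have h8 : Sa / (M - 1) ≤ 1 := by
        rw [div_le_one (by linarith)]
        linarith
      calc ∑ i ∈ S2, a i / (d i - r₂) ≤ (∑ i ∈ S2, a i) / (M - 1) := h6
        _ ≤ Sa / (M - 1) := h7
        _ ≤ 1 := h8
    have e3 : am / δ ≤ ∑ i ∈ S3, a i / (d i - r₂) := by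
      have h5 : a m / (d m - r₂) + ∑ i ∈ S3.erase m, a i / (d i - r₂)
          = ∑ i ∈ S3, a i / (d i - r₂) :=
        Finset.add_sum_erase S3 (fun i => a i / (d i - r₂)) hm
      have h6 : 0 ≤ ∑ i ∈ S3.erase m, a i / (d i - r₂) := Finset.sum_nonneg fun i hi => by
        obtain ⟨p1, p2, p3⟩ := hparkS3 i hi
        have := (hparkbound i p1 p2 p3).1
        exact div_nonneg (ha i).le (by linarith)
      rw [hdm, ← hamdef] at h5
      have h7 : (1:ℝ) - r₂ = δ := by rw [hr₂def]; ring
      rw [h7] at h5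
      linarith
    have e4 : 0 ≤ ∑ i ∈ S4, a i / (r₂ + d i) := Finset.sum_nonneg fun i hi =>
      div_nonneg (ha i).le (by have := hd0 i; linarith)
    have e5 : 4 * A + 4 ≤ am / δ := by
      rw [le_div_iff₀ hδ0]
      have := (le_div_iff₀ (by positivity : (0:ℝ) < 4 * A + 4)).1 hδa
      linarith
    have e6 : A / (1/2) = 2 * A := by ring
    linarith
  -- log facts
  have hlog2M1 : 0 ≤ Real.log (2*M+1) := Real.log_nonneg (by linarith)
  have hlog2M : 0 ≤ Real.log (2*M) := Real.log_nonneg (by linarith)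
  -- lower bound for gFun on (0, 1/2]
  have glower : ∀ z : ℝ, 0 < z → z ≤ 1/2 →
      A * Real.log ε - b * Real.log z - Sa * Real.log (2*M+1) - Sa * Real.log (2*M)
        + am * Real.log (1/2) ≤ gFun S1 S2 S3 S4 a d z := by
    intro z hz hz12
    unfold gFun
    have l1 : A * Real.log ε ≤ ∑ i ∈ S1, a i * Real.log (z + d i) := by
      have := sum_mul_ge S1 (fun i => Real.log (z + d i)) (Real.log ε)
        (fun i hi => by
          have h5 := (hS1bound i hi).1
          show Real.log ε ≤ Real.log (z + d i)
          exact Real.log_le_log hε0 (by linarith))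
      rw [← hAdef] at this
      exact this
    have l2 : ∑ i ∈ S2, a i * Real.log (d i - z) ≤ Sa * Real.log (2*M) := by
      have h1 := sum_mul_le S2 (fun i => Real.log (d i - z)) (Real.log (2*M))
        (fun i hi => by
          obtain ⟨p1, p2, p3⟩ := hparkS2 i hi
          have h6 := (hparkbound i p1 p2 p3).2
          have h7 := (hparkbound i p1 p2 p3).1
          show Real.log (d i - z) ≤ Real.log (2*M)
          exact Real.log_le_log (by linarith) (by linarith))
      have h2 : (∑ i ∈ S2, a i) * Real.log (2*M) ≤ Sa * Real.log (2*M) :=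
        mul_le_mul_of_nonneg_right (subSa S2) hlog2M
      linarith
    have l3 : am * Real.log (1/2) ≤ ∑ i ∈ S3, a i * Real.log (d i - z) := by
      have h5 : a m * Real.log (d m - z) + ∑ i ∈ S3.erase m, a i * Real.log (d i - z)
          = ∑ i ∈ S3, a i * Real.log (d i - z) :=
        Finset.add_sum_erase S3 (fun i => a i * Real.log (d i - z)) hm
      have h6 : 0 ≤ ∑ i ∈ S3.erase m, a i * Real.log (d i - z) :=
        Finset.sum_nonneg fun i hi => by
          obtain ⟨p1, p2, p3⟩ := hparkS3 i hi
          have h7 := (hparkbound i p1 p2 p3).1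
          exact mul_nonneg (ha i).le (Real.log_nonneg (by linarith))
      have h8 : am * Real.log (1/2) ≤ a m * Real.log (d m - z) := by
        rw [hdm, ← hamdef]
        exact mul_le_mul_of_nonneg_left (Real.log_le_log (by norm_num) (by linarith)) ham0.le
      linarith
    have l4 : ∑ i ∈ S4, a i * Real.log (z + d i)
        ≤ b * Real.log z + Sa * Real.log (2*M+1) := by
      have h5 : a k * Real.log (z + d k) + ∑ i ∈ S4.erase k, a i * Real.log (z + d i)
          = ∑ i ∈ S4, a i * Real.log (z + d i) :=
        Finset.add_sum_erase S4 (fun i => a i * Real.log (z + d i)) hk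
      have h6 : ∑ i ∈ S4.erase k, a i * Real.log (z + d i) ≤ Sa * Real.log (2*M+1) := by
        have h7 := sum_mul_le (S4.erase k) (fun i => Real.log (z + d i)) (Real.log (2*M+1))
          (fun i hi => by
            obtain ⟨p1, p2, p3⟩ := hparkS4 i hi
            have h8 := (hparkbound i p1 p2 p3).2
            have h9 := (hparkbound i p1 p2 p3).1
            show Real.log (z + d i) ≤ Real.log (2*M+1)
            exact Real.log_le_log (by linarith) (by linarith))
        have h10 : (∑ i ∈ S4.erase k, a i) * Real.log (2*M+1) ≤ Sa * Real.log (2*M+1) :=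
          mul_le_mul_of_nonneg_right (subSa _) hlog2M1
        linarith
      rw [hdk] at h5
      have h11 : z + 0 = z := by ring
      rw [h11, ← hbdef] at h5
      linarith
    linarith
  -- upper bound at r₁
  have gupper : gFun S1 S2 S3 S4 a d r₁
      ≤ A * Real.log 3 + A * Real.log ε - b * Real.log r₁ + Sa * Real.log (2*M) := by
    unfold gFun
    have h3ε : Real.log (3 * ε) = Real.log 3 + Real.log ε := Real.log_mul (by norm_num) hε0.ne'
    have u1 : ∑ i ∈ S1, a i * Real.log (r₁ + d i) ≤ A * Real.log 3 + A * Real.log ε := by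
      have h1 := sum_mul_le S1 (fun i => Real.log (r₁ + d i)) (Real.log (3*ε))
        (fun i hi => by
          have h5 := (hS1bound i hi).2
          have h5' := (hS1bound i hi).1
          show Real.log (r₁ + d i) ≤ Real.log (3*ε)
          exact Real.log_le_log (by linarith) (by linarith))
      rw [← hAdef] at h1
      have h2 : A * Real.log (3*ε) = A * Real.log 3 + A * Real.log ε := by
        rw [h3ε]; ring
      linarith
    have u2 : 0 ≤ ∑ i ∈ S2, a i * Real.log (d i - r₁) := Finset.sum_nonneg fun i hi => by
      obtain ⟨p1, p2, p3⟩ := hparkS2 i hi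
      have := (hparkbound i p1 p2 p3).1
      exact mul_nonneg (ha i).le (Real.log_nonneg (by linarith))
    have u3 : ∑ i ∈ S3, a i * Real.log (d i - r₁) ≤ Sa * Real.log (2*M) := by
      have h5 : a m * Real.log (d m - r₁) + ∑ i ∈ S3.erase m, a i * Real.log (d i - r₁)
          = ∑ i ∈ S3, a i * Real.log (d i - r₁) :=
        Finset.add_sum_erase S3 (fun i => a i * Real.log (d i - r₁)) hm
      have h6 : a m * Real.log (d m - r₁) ≤ 0 := by
        rw [hdm]
        have h7 : Real.log (1 - r₁) ≤ 0 := Real.log_nonpos (by linarith) (by linarith)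
        nlinarith [(ha m).le]
      have h8 : ∑ i ∈ S3.erase m, a i * Real.log (d i - r₁) ≤ Sa * Real.log (2*M) := by
        have h9 := sum_mul_le (S3.erase m) (fun i => Real.log (d i - r₁)) (Real.log (2*M))
          (fun i hi => by
            obtain ⟨p1, p2, p3⟩ := hparkS3 i hi
            have hq1 := (hparkbound i p1 p2 p3).1
            have hq2 := (hparkbound i p1 p2 p3).2
            show Real.log (d i - r₁) ≤ Real.log (2*M)
            exact Real.log_le_log (by linarith) (by linarith))
        have h10 : (∑ i ∈ S3.erase m, a i) * Real.log (2*M) ≤ Sa * Real.log (2*M) :=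
          mul_le_mul_of_nonneg_right (subSa _) hlog2M
        linarith
      linarith
    have u4 : b * Real.log r₁ ≤ ∑ i ∈ S4, a i * Real.log (r₁ + d i) := by
      have h5 : a k * Real.log (r₁ + d k) + ∑ i ∈ S4.erase k, a i * Real.log (r₁ + d i)
          = ∑ i ∈ S4, a i * Real.log (r₁ + d i) :=
        Finset.add_sum_erase S4 (fun i => a i * Real.log (r₁ + d i)) hk
      have h6 : 0 ≤ ∑ i ∈ S4.erase k, a i * Real.log (r₁ + d i) :=
        Finset.sum_nonneg fun i hi => by
          obtain ⟨p1, p2, p3⟩ := hparkS4 i hi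
          have := (hparkbound i p1 p2 p3).1
          exact mul_nonneg (ha i).le (Real.log_nonneg (by linarith))
      rw [hdk] at h5
      have h11 : r₁ + 0 = r₁ := by ring
      rw [h11, ← hbdef] at h5
      linarith
    linarith
  -- lower bound at r₂
  have glowr₂ : A * Real.log (1/2) + am * Real.log δ - Sa * Real.log (2*M+1)
      - Sa * Real.log (2*M) ≤ gFun S1 S2 S3 S4 a d r₂ := by
    unfold gFun
    have l1 : A * Real.log (1/2) ≤ ∑ i ∈ S1, a i * Real.log (r₂ + d i) := by
      have := sum_mul_ge S1 (fun i => Real.log (r₂ + d i)) (Real.log (1/2))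
        (fun i hi => by
          have h5 := hd0 i
          show Real.log (1/2) ≤ Real.log (r₂ + d i)
          exact Real.log_le_log (by norm_num) (by linarith))
      rw [← hAdef] at this
      exact this
    have l2 : ∑ i ∈ S2, a i * Real.log (d i - r₂) ≤ Sa * Real.log (2*M) := by
      have h1 := sum_mul_le S2 (fun i => Real.log (d i - r₂)) (Real.log (2*M))
        (fun i hi => by
          obtain ⟨p1, p2, p3⟩ := hparkS2 i hi
          have h6 := (hparkbound i p1 p2 p3).2
          have h7 := (hparkbound i p1 p2 p3).1
          show Real.log (d i - r₂) ≤ Real.log (2*M)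
          exact Real.log_le_log (by linarith) (by linarith))
      have h2 : (∑ i ∈ S2, a i) * Real.log (2*M) ≤ Sa * Real.log (2*M) :=
        mul_le_mul_of_nonneg_right (subSa S2) hlog2M
      linarith
    have l3 : am * Real.log δ ≤ ∑ i ∈ S3, a i * Real.log (d i - r₂) := by
      have h5 : a m * Real.log (d m - r₂) + ∑ i ∈ S3.erase m, a i * Real.log (d i - r₂)
          = ∑ i ∈ S3, a i * Real.log (d i - r₂) :=
        Finset.add_sum_erase S3 (fun i => a i * Real.log (d i - r₂)) hm
      have h6 : 0 ≤ ∑ i ∈ S3.erase m, a i * Real.log (d i - r₂) :=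
        Finset.sum_nonneg fun i hi => by
          obtain ⟨p1, p2, p3⟩ := hparkS3 i hi
          have h7 := (hparkbound i p1 p2 p3).1
          exact mul_nonneg (ha i).le (Real.log_nonneg (by linarith))
      rw [hdm, ← hamdef] at h5
      have h7 : (1:ℝ) - r₂ = δ := by rw [hr₂def]; ring
      rw [h7] at h5
      linarith
    have l4 : ∑ i ∈ S4, a i * Real.log (r₂ + d i) ≤ Sa * Real.log (2*M+1) := by
      have h5 : a k * Real.log (r₂ + d k) + ∑ i ∈ S4.erase k, a i * Real.log (r₂ + d i)
          = ∑ i ∈ S4, a i * Real.log (r₂ + d i) :=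
        Finset.add_sum_erase S4 (fun i => a i * Real.log (r₂ + d i)) hk
      have h6 : ∑ i ∈ S4.erase k, a i * Real.log (r₂ + d i) ≤ Sa * Real.log (2*M+1) := by
        have h7 := sum_mul_le (S4.erase k) (fun i => Real.log (r₂ + d i)) (Real.log (2*M+1))
          (fun i hi => by
            obtain ⟨p1, p2, p3⟩ := hparkS4 i hi
            have h8 := (hparkbound i p1 p2 p3).2
            have h9 := (hparkbound i p1 p2 p3).1
            show Real.log (r₂ + d i) ≤ Real.log (2*M+1)
            exact Real.log_le_log (by linarith) (by linarith))
        have h10 : (∑ i ∈ S4.erase k, a i) * Real.log (2*M+1) ≤ Sa * Real.log (2*M+1) :=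
          mul_le_mul_of_nonneg_right (subSa _) hlog2M1
        linarith
      rw [hdk] at h5
      have h11 : r₂ + 0 = r₂ := by ring
      rw [h11, ← hbdef] at h5
      have h12 : b * Real.log r₂ ≤ 0 := by
        have h13 : Real.log r₂ ≤ 0 := Real.log_nonpos hr₂pos.le hr₂lt1.le
        nlinarith [hb0.le]
      linarith
    linarith
  set K := gFun S1 S2 S3 S4 a d r₂ with hKdef
  clear_value K
  have hgap : gFun S1 S2 S3 S4 a d r₁ < K := by
    have hlogr₁ : b * Real.log r₁ = b * Real.log ε + b * Real.log (b/(2*A+2)) := by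
      rw [hr₁def, mul_div_assoc, Real.log_mul hε0.ne' (by positivity)]
      ring
    have hEbound : A * Real.log ε - b * Real.log ε ≤ E - 1 := by
      have h1 := mul_le_mul_of_nonneg_left hεE (by linarith : (0:ℝ) ≤ A - b)
      have hAb : A - b ≠ 0 := ne_of_gt (by linarith)
      have h2 : (A - b) * ((E - 1)/(A - b)) = E - 1 := by
        rw [mul_comm, div_mul_cancel₀ _ hAb]
      nlinarith
    have h1 := gupper
    have h2 := glowr₂
    rw [hKdef] at h2 ⊢
    linarith [hEdef.le, hEdef.ge]
  -- the far-left point za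
  set F0 : ℝ := A * Real.log ε - Sa * Real.log (2*M+1) - Sa * Real.log (2*M)
      + am * Real.log (1/2) with hF0def
  clear_value F0
  set za : ℝ := min (r₁/2) (Real.exp ((F0 - K - 1)/b)) with hzadef
  have hza0 : 0 < za := lt_min (by linarith) (Real.exp_pos _)
  have hzar : za ≤ r₁/2 := min_le_left _ _
  have hza12 : za ≤ 1/2 := by linarith
  have hlogza : Real.log za ≤ (F0 - K - 1)/b := by
    calc Real.log za ≤ Real.log (Real.exp ((F0 - K - 1)/b)) :=
          Real.log_le_log hza0 (min_le_right _ _)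
      _ = (F0 - K - 1)/b := Real.log_exp _
  clear_value za
  have hgza : K + 1 ≤ gFun S1 S2 S3 S4 a d za := by
    have h1 := glower za hza0 hza12
    have h2 : b * Real.log za ≤ F0 - K - 1 := by
      have h3 := mul_le_mul_of_nonneg_left hlogza hb0.le
      have h4 : b * ((F0 - K - 1)/b) = F0 - K - 1 := by field_simp
      linarith
    linarith [hF0def.le, hF0def.ge]
  -- IVT
  have hcont : ContinuousOn (gFun S1 S2 S3 S4 a d) (Icc za r₁) := by
    intro z hz
    have hz0 : 0 < z := lt_of_lt_of_le hza0 hz.1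
    have hzlt1 : z < 1 := by have := hz.2; linarith
    exact (hasDerivAt_gFun S1 S2 S3 S4 a d
      (fun i _ => by have := hd0 i; linarith)
      (fun i hi => by have := hd1S23 i hi; linarith)).continuousAt.continuousWithinAt
  have hKIcc : K ∈ Icc (gFun S1 S2 S3 S4 a d r₁) (gFun S1 S2 S3 S4 a d za) :=
    ⟨hgap.le, by linarith [hgza]⟩
  obtain ⟨z₁, hz₁Icc, hz₁K⟩ := intermediate_value_Icc' (by linarith : za ≤ r₁) hcont hKIcc
  have hz₁0 : 0 < z₁ := lt_of_lt_of_le hza0 hz₁Icc.1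
  have hz₁r : z₁ ≤ r₁ := hz₁Icc.2
  refine ⟨d, hdinj, K, z₁, r₂, ne_of_lt (by linarith : z₁ < r₂), ?_, ?_, hz₁K, hKdef.symm, ?_, F2⟩
  · exact ⟨fun i _ => by have := hd0 i; linarith,
      fun i hi => by have := hd1S23 i hi; linarith⟩
  · exact ⟨fun i _ => by have := hd0 i; linarith,
      fun i hi => by have := hd1S23 i hi; linarith⟩
  · exact F1 z₁ hz₁0 hz₁r

/-- Theorem 3.1(a): if all four sign classes are non-empty, the multistability criterion
holds iff `∑_{i ∈ S1} a i > min_{i ∈ S4} a i` or `∑_{i ∈ S2} a i > min_{i ∈ S3} a i`. -/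
theorem multistability_all_four_nonempty
    {s : ℕ} (hs : 0 < s)
    (S1 S2 S3 S4 : Finset (Fin s))
    (h12 : Disjoint S1 S2) (h13 : Disjoint S1 S3) (h14 : Disjoint S1 S4)
    (h23 : Disjoint S2 S3) (h24 : Disjoint S2 S4) (h34 : Disjoint S3 S4)
    (hcover : S1 ∪ S2 ∪ S3 ∪ S4 = Finset.univ)
    (a : Fin s → ℝ) (ha : ∀ i, 0 < a i)
    (hS1 : S1.Nonempty) (hS2 : S2.Nonempty) (hS3 : S3.Nonempty) (hS4 : S4.Nonempty) :
    MultistabCriterion S1 S2 S3 S4 a ↔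
      (S4.inf' hS4 a < ∑ i ∈ S1, a i ∨ S3.inf' hS3 a < ∑ i ∈ S2, a i) := by
  constructor
  · intro hcrit
    by_contra hno
    push_neg at hno
    obtain ⟨hno4, hno3⟩ := hno
    have hcond4 : ∀ j ∈ S4, ∑ i ∈ S1, a i ≤ a j := fun j hj =>
      le_trans hno4 (Finset.inf'_le a hj)
    have hcond3 : ∀ j ∈ S3, ∑ i ∈ S2, a i ≤ a j := fun j hj =>
      le_trans hno3 (Finset.inf'_le a hj)
    exact necessity h14 h23 ha hS1 hS2 hS3 hS4 hcond4 hcond3 hcrit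
  · rintro (h | h)
    · exact sufficiency S1 S2 S3 S4 h12 h13 h14 h23 h24 h34 a ha hS1 hS3 hS4 h
    · exact crit_swap
        (sufficiency S2 S1 S4 S3 h12.symm h24 h23 h14 h13 h34.symm a ha hS2 hS4 hS3 h)
end

section
/- Suppose S₁, S₃ and S₄ are non-empty and S₂ = ∅. Then the multistability criterion holds if and only if Σ_{i∈S₁} a_i > min_{i∈S₄} a_i. (This is Theorem 3.1(b)(1).) -/
open Finset

section Aux
open Filter

lemma key2 {ι : Type*} (S1 S3 S4 : Finset ι) (a α β γ : ι → ℝ)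
    (ha : ∀ i, 0 < a i)
    (hβ : ∀ j ∈ S4, 0 < β j) (hγ : ∀ k ∈ S3, 0 < γ k)
    (hS1 : S1.Nonempty) (hS3 : S3.Nonempty)
    (hmin : ∀ j ∈ S4, ∑ i ∈ S1, a i ≤ a j)
    (heq : ∑ i ∈ S1, a i * α i = ∑ j ∈ S4, a j * β j + ∑ k ∈ S3, a k * γ k) :
    ∑ j ∈ S4, a j * β j ^ 2 < ∑ i ∈ S1, a i * α i ^ 2 + ∑ k ∈ S3, a k * γ k ^ 2 := by
  set A := ∑ i ∈ S1, a i with hA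
  have hApos : 0 < A := Finset.sum_pos (fun i _ => ha i) hS1
  set T := ∑ j ∈ S4, a j * β j + ∑ k ∈ S3, a k * γ k with hT
  have hG3 : 0 < ∑ k ∈ S3, a k * γ k :=
    Finset.sum_pos (fun k hk => mul_pos (ha k) (hγ k hk)) hS3
  have hS4nonneg : 0 ≤ ∑ j ∈ S4, a j * β j :=
    Finset.sum_nonneg (fun j hj => le_of_lt (mul_pos (ha j) (hβ j hj)))
  have hTpos : 0 < T := by positivity
  -- Cauchy-Schwarz: T^2 ≤ A * ∑ a α²
  have hcs : T ^ 2 ≤ A * ∑ i ∈ S1, a i * α i ^ 2 := by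
    rw [← heq]
    exact Finset.sum_sq_le_sum_mul_sum_of_sq_eq_mul S1
      (fun i _ => (ha i).le) (fun i _ => mul_nonneg (ha i).le (sq_nonneg _))
      (fun i _ => by ring)
  -- each β j ≤ T / A
  have hβle : ∀ j ∈ S4, β j ≤ T / A := by
    intro j hj
    rw [le_div_iff₀ hApos]
    calc β j * A ≤ β j * a j := by
          have := hmin j hj; nlinarith [ (hβ j hj) ]
      _ = a j * β j := by ring
      _ ≤ ∑ j ∈ S4, a j * β j :=
          Finset.single_le_sum (fun i hi => le_of_lt (mul_pos (ha i) (hβ i hi))) hj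
      _ ≤ T := by rw [hT]; linarith
  have h4 : ∑ j ∈ S4, a j * β j ^ 2 ≤ (T / A) * ∑ j ∈ S4, a j * β j := by
    rw [Finset.mul_sum]
    refine Finset.sum_le_sum (fun j hj => ?_)
    have h1 := hβle j hj
    have h2 := (hβ j hj)
    have h3 := (ha j)
    nlinarith [mul_le_mul_of_nonneg_left h1 (mul_pos h3 h2).le]
  have hsum4 : ∑ j ∈ S4, a j * β j = T - ∑ k ∈ S3, a k * γ k := by rw [hT]; ring
  have hG3sq : 0 ≤ ∑ k ∈ S3, a k * γ k ^ 2 :=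
    Finset.sum_nonneg (fun k hk => mul_nonneg (ha k).le (sq_nonneg _))
  have hcs' : T ^ 2 / A ≤ ∑ i ∈ S1, a i * α i ^ 2 := by
    rw [div_le_iff₀ hApos]; nlinarith
  calc ∑ j ∈ S4, a j * β j ^ 2 ≤ (T / A) * (T - ∑ k ∈ S3, a k * γ k) := by rw [← hsum4]; exact h4
    _ = T ^ 2 / A - (T / A) * ∑ k ∈ S3, a k * γ k := by ring
    _ < ∑ i ∈ S1, a i * α i ^ 2 + ∑ k ∈ S3, a k * γ k ^ 2 := by
        have : 0 < (T / A) * ∑ k ∈ S3, a k * γ k := mul_pos (div_pos hTpos hApos) hG3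
        linarith

noncomputable def gDeriv2 {s : ℕ} (S1 S3 S4 : Finset (Fin s)) (a d : Fin s → ℝ) (z : ℝ) : ℝ :=
  ∑ j ∈ S4, a j / (z + d j) ^ 2 - ∑ i ∈ S1, a i / (z + d i) ^ 2 - ∑ k ∈ S3, a k / (d k - z) ^ 2

lemma hasDerivAt_gFun_s1 {s : ℕ} (S1 S3 S4 : Finset (Fin s)) (a d : Fin s → ℝ) {z : ℝ}
    (h1 : ∀ i ∈ S1, 0 < z + d i) (h3 : ∀ k ∈ S3, 0 < d k - z) (h4 : ∀ j ∈ S4, 0 < z + d j) :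
    HasDerivAt (gFun S1 ∅ S3 S4 a d) (gDeriv S1 ∅ S3 S4 a d z) z := by
  have H1 : HasDerivAt (fun z => ∑ i ∈ S1, a i * Real.log (z + d i))
      (∑ i ∈ S1, a i / (z + d i)) z := by
    refine HasDerivAt.fun_sum (𝕜 := ℝ) (F := ℝ) (fun i hi => ?_)
    have h := (((hasDerivAt_id z).add_const (d i)).log (ne_of_gt (h1 i hi))).const_mul (a i)
    refine h.congr_deriv ?_
    simp [div_eq_mul_inv]
  have H3 : HasDerivAt (fun z => ∑ k ∈ S3, a k * Real.log (d k - z))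
      (∑ k ∈ S3, -(a k / (d k - z))) z := by
    refine HasDerivAt.fun_sum (𝕜 := ℝ) (F := ℝ) (fun k hk => ?_)
    have h := (((hasDerivAt_id z).const_sub (d k)).log (ne_of_gt (h3 k hk))).const_mul (a k)
    refine h.congr_deriv ?_
    simp [neg_div, div_eq_mul_inv]
  have H4 : HasDerivAt (fun z => ∑ j ∈ S4, a j * Real.log (z + d j))
      (∑ j ∈ S4, a j / (z + d j)) z := by
    refine HasDerivAt.fun_sum (𝕜 := ℝ) (F := ℝ) (fun j hj => ?_)
    have h := (((hasDerivAt_id z).add_const (d j)).log (ne_of_gt (h4 j hj))).const_mul (a j)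
    refine h.congr_deriv ?_
    simp [div_eq_mul_inv]
  have H := (H1.add H3).sub H4
  have efun : gFun S1 ∅ S3 S4 a d = fun z =>
      ((∑ i ∈ S1, a i * Real.log (z + d i)) + ∑ k ∈ S3, a k * Real.log (d k - z))
        - ∑ j ∈ S4, a j * Real.log (z + d j) := by
    funext w; simp [gFun]
  rw [efun]
  refine H.congr_deriv ?_
  simp [gDeriv, Finset.sum_neg_distrib]
  ring


lemma hasDerivAt_gDeriv_s1 {s : ℕ} (S1 S3 S4 : Finset (Fin s)) (a d : Fin s → ℝ) {z : ℝ}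
    (h1 : ∀ i ∈ S1, 0 < z + d i) (h3 : ∀ k ∈ S3, 0 < d k - z) (h4 : ∀ j ∈ S4, 0 < z + d j) :
    HasDerivAt (gDeriv S1 ∅ S3 S4 a d) (gDeriv2 S1 S3 S4 a d z) z := by
  have H1 : HasDerivAt (fun z => ∑ i ∈ S1, a i / (z + d i))
      (∑ i ∈ S1, -(a i / (z + d i) ^ 2)) z := by
    refine HasDerivAt.fun_sum (𝕜 := ℝ) (F := ℝ) (fun i hi => ?_)
    have h := (hasDerivAt_const z (a i)).div ((hasDerivAt_id z).add_const (d i))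
      (ne_of_gt (h1 i hi))
    refine h.congr_deriv ?_
    simp [neg_div]
  have H3 : HasDerivAt (fun z => ∑ k ∈ S3, a k / (d k - z))
      (∑ k ∈ S3, a k / (d k - z) ^ 2) z := by
    refine HasDerivAt.fun_sum (𝕜 := ℝ) (F := ℝ) (fun k hk => ?_)
    have h := (hasDerivAt_const z (a k)).div ((hasDerivAt_id z).const_sub (d k))
      (ne_of_gt (h3 k hk))
    refine h.congr_deriv ?_
    simp [neg_div]
  have H4 : HasDerivAt (fun z => ∑ j ∈ S4, a j / (z + d j))
      (∑ j ∈ S4, -(a j / (z + d j) ^ 2)) z := by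
    refine HasDerivAt.fun_sum (𝕜 := ℝ) (F := ℝ) (fun j hj => ?_)
    have h := (hasDerivAt_const z (a j)).div ((hasDerivAt_id z).add_const (d j))
      (ne_of_gt (h4 j hj))
    refine h.congr_deriv ?_
    simp [neg_div]
  have H := (H1.sub H3).sub H4
  have efun : gDeriv S1 ∅ S3 S4 a d = fun z =>
      ((∑ i ∈ S1, a i / (z + d i)) - ∑ k ∈ S3, a k / (d k - z))
        - ∑ j ∈ S4, a j / (z + d j) := by
    funext w; simp [gDeriv]
  rw [efun]
  refine H.congr_deriv ?_
  simp [gDeriv2, Finset.sum_neg_distrib]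
  ring

lemma exists_neg_deriv_crossing {f f' : ℝ → ℝ} {p q Km Kp : ℝ} (hpq : p < q) (hK : Km < Kp)
    (hd : ∀ x ∈ Set.Icc p q, HasDerivAt f (f' x) x)
    (hfp : Kp < f p) (hfq : f q < Km) :
    ∃ x, x ∈ Set.Ioo p q ∧ f' x < 0 ∧ Km < f x ∧ f x < Kp := by
  have hcont : ContinuousOn f (Set.Icc p q) :=
    fun x hx => (hd x hx).continuousAt.continuousWithinAt
  -- q' : first point where f ≤ Km
  set S := Set.Icc p q ∩ f ⁻¹' Set.Iic Km with hS
  have hSclosed : IsClosed S := hcont.preimage_isClosed_of_isClosed isClosed_Icc isClosed_Iic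
  have hSne : S.Nonempty := ⟨q, ⟨le_of_lt hpq, le_refl q⟩, le_of_lt hfq⟩
  have hSbdd : BddBelow S := ⟨p, fun x hx => hx.1.1⟩
  set q' := sInf S with hq'
  have hq'S : q' ∈ S := hSclosed.csInf_mem hSne hSbdd
  have hq'Icc : q' ∈ Set.Icc p q := hq'S.1
  have hfq' : f q' ≤ Km := hq'S.2
  have hpq' : p < q' := by
    rcases lt_or_eq_of_le hq'Icc.1 with h | h
    · exact h
    · exfalso; rw [← h] at hfq'; linarith
  have hbefore : ∀ x ∈ Set.Ico p q', Km < f x := by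
    intro x hx
    by_contra hc
    push_neg at hc
    have : x ∈ S := ⟨⟨hx.1, le_trans hx.2.le hq'Icc.2⟩, hc⟩
    exact absurd (csInf_le hSbdd this) (not_le.mpr hx.2)
  -- p' : last point before q' where f ≥ Kp
  set T := Set.Icc p q' ∩ f ⁻¹' Set.Ici Kp with hT
  have hcont' : ContinuousOn f (Set.Icc p q') :=
    hcont.mono (Set.Icc_subset_Icc le_rfl hq'Icc.2)
  have hTclosed : IsClosed T := hcont'.preimage_isClosed_of_isClosed isClosed_Icc isClosed_Ici
  have hTne : T.Nonempty := ⟨p, ⟨le_refl p, hpq'.le⟩, le_of_lt hfp⟩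
  have hTbdd : BddAbove T := ⟨q', fun x hx => hx.1.2⟩
  set p' := sSup T with hp'
  have hp'T : p' ∈ T := hTclosed.csSup_mem hTne hTbdd
  have hfp' : Kp ≤ f p' := hp'T.2
  have hp'q' : p' < q' := by
    rcases lt_or_eq_of_le hp'T.1.2 with h | h
    · exact h
    · exfalso; rw [h] at hfp'; linarith
  have hpp' : p ≤ p' := hp'T.1.1
  have hafter : ∀ x ∈ Set.Ioc p' q', f x < Kp := by
    intro x hx
    by_contra hc
    push_neg at hc
    have : x ∈ T := ⟨⟨le_trans hpp' hx.1.le, hx.2⟩, hc⟩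
    exact absurd (le_csSup hTbdd this) (not_le.mpr hx.1)
  -- MVT on [p', q']
  have hsub : Set.Icc p' q' ⊆ Set.Icc p q :=
    Set.Icc_subset_Icc hpp' hq'Icc.2
  obtain ⟨x, hx, hslope⟩ := exists_hasDerivAt_eq_slope f f' hp'q'
    (fun y hy => (hd y (hsub hy)).continuousAt.continuousWithinAt)
    (fun y hy => hd y (hsub (Set.Ioo_subset_Icc_self hy)))
  refine ⟨x, ⟨lt_of_le_of_lt hpp' hx.1, lt_of_lt_of_le hx.2 hq'Icc.2⟩, ?_, ?_, ?_⟩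
  · rw [hslope]
    apply div_neg_of_neg_of_pos
    · linarith
    · linarith [hx.1, hx.2]
  · exact hbefore x ⟨le_trans hpp' hx.1.le, hx.2⟩
  · exact hafter x ⟨hx.1, hx.2.le⟩

lemma gDeriv2_neg {s : ℕ} (S1 S3 S4 : Finset (Fin s)) (a d : Fin s → ℝ) {z : ℝ}
    (ha : ∀ i, 0 < a i) (hS1 : S1.Nonempty) (hS3 : S3.Nonempty)
    (hge : ∀ j ∈ S4, ∑ i ∈ S1, a i ≤ a j)
    (h1 : ∀ i ∈ S1, 0 < z + d i) (h3 : ∀ k ∈ S3, 0 < d k - z) (h4 : ∀ j ∈ S4, 0 < z + d j)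
    (hcrit : gDeriv S1 ∅ S3 S4 a d z = 0) :
    gDeriv2 S1 S3 S4 a d z < 0 := by
  have e1 : ∀ (c : ℝ) (x : ℝ), c / x = c * (1 / x) := fun c x => (mul_one_div c x).symm
  have heq : ∑ i ∈ S1, a i * (1 / (z + d i))
      = ∑ j ∈ S4, a j * (1 / (z + d j)) + ∑ k ∈ S3, a k * (1 / (d k - z)) := by
    have := hcrit
    simp only [gDeriv, Finset.sum_empty, add_zero] at this
    simp only [← e1]
    linarith
  have key := key2 S1 S3 S4 a (fun i => 1 / (z + d i)) (fun j => 1 / (z + d j))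
    (fun k => 1 / (d k - z)) ha
    (fun j hj => by have := h4 j hj; positivity)
    (fun k hk => by have := h3 k hk; positivity)
    hS1 hS3 hge heq
  have e2 : ∀ (c x : ℝ), c * (1 / x) ^ 2 = c / x ^ 2 := fun c x => by
    rw [one_div, inv_pow, div_eq_mul_inv]
  simp only [e2] at key
  simp only [gDeriv2]
  linarith

lemma forward_aux {s : ℕ} (S1 S3 S4 : Finset (Fin s)) (a d : Fin s → ℝ)
    (ha : ∀ i, 0 < a i) (hS1 : S1.Nonempty) (hS3 : S3.Nonempty)
    (hge : ∀ j ∈ S4, ∑ i ∈ S1, a i ≤ a j)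
    {z₁ z₂ : ℝ} (h12 : z₁ < z₂)
    (hp1 : ∀ i ∈ S1 ∪ S4, -d i < z₁) (hp2 : ∀ k ∈ S3, z₂ < d k)
    (hgeq : gFun S1 ∅ S3 S4 a d z₁ = gFun S1 ∅ S3 S4 a d z₂)
    (hd1 : gDeriv S1 ∅ S3 S4 a d z₁ < 0) : False := by
  set f := gFun S1 ∅ S3 S4 a d with hf
  set f' := gDeriv S1 ∅ S3 S4 a d with hf'
  set f'' := gDeriv2 S1 S3 S4 a d with hf''
  -- positivity on [z₁, z₂]
  have hpos : ∀ z ∈ Set.Icc z₁ z₂,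
      (∀ i ∈ S1, 0 < z + d i) ∧ (∀ k ∈ S3, 0 < d k - z) ∧ (∀ j ∈ S4, 0 < z + d j) := by
    intro z hz
    refine ⟨fun i hi => ?_, fun k hk => ?_, fun j hj => ?_⟩
    · have := hp1 i (Finset.mem_union_left _ hi); linarith [hz.1]
    · have := hp2 k hk; linarith [hz.2]
    · have := hp1 j (Finset.mem_union_right _ hj); linarith [hz.1]
  have hg : ∀ z ∈ Set.Icc z₁ z₂, HasDerivAt f (f' z) z := fun z hz =>
    hasDerivAt_gFun_s1 S1 S3 S4 a d (hpos z hz).1 (hpos z hz).2.1 (hpos z hz).2.2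
  have hg' : ∀ z ∈ Set.Icc z₁ z₂, HasDerivAt f' (f'' z) z := fun z hz =>
    hasDerivAt_gDeriv_s1 S1 S3 S4 a d (hpos z hz).1 (hpos z hz).2.1 (hpos z hz).2.2
  -- Step 1: find t ∈ (z₁, z₂) with f t < f z₁
  have hz₁Icc : z₁ ∈ Set.Icc z₁ z₂ := ⟨le_rfl, h12.le⟩
  have hslope := hasDerivAt_iff_tendsto_slope.mp (hg z₁ hz₁Icc)
  have hslope' : ∀ᶠ x in nhdsWithin z₁ (Set.Ioi z₁), slope f z₁ x < 0 := by
    have h1 : ∀ᶠ x in nhdsWithin z₁ {z₁}ᶜ, slope f z₁ x < 0 :=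
      hslope.eventually_lt_const hd1
    exact nhdsWithin_mono z₁ (fun x hx => ne_of_gt hx) h1
  have hmem : Set.Ioo z₁ z₂ ∈ nhdsWithin z₁ (Set.Ioi z₁) :=
    Ioo_mem_nhdsGT_of_mem ⟨le_rfl, h12⟩
  obtain ⟨t, hts, htI⟩ := (hslope'.and (Filter.eventually_of_mem hmem (fun x hx => hx))).exists
  have htlt : f t < f z₁ := by
    have h2 : t - z₁ > 0 := sub_pos.mpr htI.1
    have := hts
    rw [slope_def_field] at this
    rcases div_neg_iff.mp this with ⟨h4, h5⟩ | ⟨h4, h5⟩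
    · linarith
    · linarith
  -- Step 2: MVT gives c ∈ (t, z₂) with f' c > 0
  have hsub2 : Set.Icc t z₂ ⊆ Set.Icc z₁ z₂ := Set.Icc_subset_Icc htI.1.le le_rfl
  obtain ⟨c, hcI, hcslope⟩ := exists_hasDerivAt_eq_slope f f' htI.2
    (fun y hy => (hg y (hsub2 hy)).continuousAt.continuousWithinAt)
    (fun y hy => hg y (hsub2 (Set.Ioo_subset_Icc_self hy)))
  have hfc : 0 < f' c := by
    rw [hcslope]
    apply div_pos
    · rw [← hgeq]; linarith
    · linarith [htI.2, hcI.1, hcI.2]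
  have hcIcc : c ∈ Set.Icc z₁ z₂ := ⟨(htI.1.trans hcI.1).le, hcI.2.le⟩
  have hz₁c : z₁ < c := htI.1.trans hcI.1
  -- Step 3: least zero of f' in [z₁, c]
  have hsubc : Set.Icc z₁ c ⊆ Set.Icc z₁ z₂ := Set.Icc_subset_Icc le_rfl hcIcc.2
  have hcont' : ContinuousOn f' (Set.Icc z₁ c) := fun y hy =>
    (hg' y (hsubc hy)).continuousAt.continuousWithinAt
  set Z := Set.Icc z₁ c ∩ f' ⁻¹' {(0:ℝ)} with hZ
  have hZclosed : IsClosed Z :=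
    hcont'.preimage_isClosed_of_isClosed isClosed_Icc isClosed_singleton
  have hZne : Z.Nonempty := by
    have hivt := intermediate_value_Icc hz₁c.le hcont'
    have h0 : (0:ℝ) ∈ Set.Icc (f' z₁) (f' c) := ⟨hd1.le, hfc.le⟩
    obtain ⟨x, hxI, hx0⟩ := hivt h0
    exact ⟨x, hxI, hx0⟩
  have hZbdd : BddBelow Z := ⟨z₁, fun x hx => hx.1.1⟩
  set m := sInf Z with hm
  have hmZ : m ∈ Z := hZclosed.csInf_mem hZne hZbdd
  have hfm : f' m = 0 := hmZ.2
  have hz₁m : z₁ < m := by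
    rcases lt_or_eq_of_le hmZ.1.1 with h | h
    · exact h
    · exfalso; rw [← h] at hfm; linarith
  have hneg : ∀ x ∈ Set.Ico z₁ m, f' x < 0 := by
    intro x hx
    by_contra hc0
    push_neg at hc0
    have hxc : x ∈ Set.Icc z₁ c := ⟨hx.1, hx.2.le.trans hmZ.1.2⟩
    rcases lt_or_eq_of_le hc0 with h | h
    · have hivt := intermediate_value_Icc hx.1 (hcont'.mono (Set.Icc_subset_Icc le_rfl hxc.2))
      obtain ⟨y, hyI, hy0⟩ := hivt (⟨hd1.le, h.le⟩ : (0:ℝ) ∈ Set.Icc (f' z₁) (f' x))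
      have hyZ : y ∈ Z := ⟨⟨hyI.1, hyI.2.trans hxc.2⟩, hy0⟩
      have := csInf_le hZbdd hyZ
      have : y < m := lt_of_le_of_lt hyI.2 hx.2
      linarith [csInf_le hZbdd hyZ]
    · have hxZ : x ∈ Z := ⟨hxc, h.symm⟩
      linarith [csInf_le hZbdd hxZ, hx.2]
  -- Step 4: f'' m < 0 and slope contradiction from the left
  have hmIcc : m ∈ Set.Icc z₁ z₂ := hsubc hmZ.1
  have hf''m : f'' m < 0 :=
    gDeriv2_neg S1 S3 S4 a d ha hS1 hS3 hge (hpos m hmIcc).1 (hpos m hmIcc).2.1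
      (hpos m hmIcc).2.2 hfm
  have hslopem := hasDerivAt_iff_tendsto_slope.mp (hg' m hmIcc)
  have hslopem' : ∀ᶠ x in nhdsWithin m (Set.Iio m), slope f' m x < 0 := by
    have h1 : ∀ᶠ x in nhdsWithin m {m}ᶜ, slope f' m x < 0 :=
      hslopem.eventually_lt_const hf''m
    exact nhdsWithin_mono m (fun x hx => ne_of_lt hx) h1
  have hmem2 : Set.Ioo z₁ m ∈ nhdsWithin m (Set.Iio m) :=
    Ioo_mem_nhdsLT_of_mem ⟨hz₁m, le_rfl⟩
  obtain ⟨x, hxs, hxI⟩ :=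
    (hslopem'.and (Filter.eventually_of_mem hmem2 (fun x hx => hx))).exists
  rw [slope_def_field, hfm] at hxs
  have hxneg : f' x < 0 := hneg x ⟨hxI.1.le, hxI.2⟩
  have hxm : x - m < 0 := sub_neg.mpr hxI.2
  rcases div_neg_iff.mp hxs with ⟨h4, h5⟩ | ⟨h4, h5⟩
  · linarith
  · linarith

set_option maxHeartbeats 1000000 in
lemma backward_aux {s : ℕ} (S1 S3 S4 : Finset (Fin s)) (a : Fin s → ℝ) (ha : ∀ i, 0 < a i)
    (h14 : Disjoint S1 S4) (h13 : Disjoint S1 S3) (h34 : Disjoint S3 S4)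
    (hS1 : S1.Nonempty) (hS3 : S3.Nonempty) {j0 : Fin s} (hj0 : j0 ∈ S4)
    (hlt : a j0 < ∑ i ∈ S1, a i) :
    ∃ d : Fin s → ℝ, Function.Injective d ∧
      ∃ K z₁ z₂ : ℝ, z₁ ≠ z₂ ∧
        ((∀ i ∈ S1 ∪ S4, -d i < z₁) ∧ (∀ i ∈ S3, z₁ < d i)) ∧
        ((∀ i ∈ S1 ∪ S4, -d i < z₂) ∧ (∀ i ∈ S3, z₂ < d i)) ∧
        gFun S1 ∅ S3 S4 a d z₁ = K ∧ gFun S1 ∅ S3 S4 a d z₂ = K ∧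
        gDeriv S1 ∅ S3 S4 a d z₁ < 0 ∧ gDeriv S1 ∅ S3 S4 a d z₂ < 0 := by
  classical
  set A := ∑ i ∈ S1, a i with hA
  set m := a j0 with hm
  set At := ∑ i : Fin s, a i with hAt
  have hApos : 0 < A := Finset.sum_pos (fun i _ => ha i) hS1
  have hmpos : 0 < m := ha j0
  have hAm : 0 < A - m := by linarith
  have hAAt : A ≤ At := Finset.sum_le_sum_of_subset_of_nonneg (Finset.subset_univ S1)
    (fun i _ _ => (ha i).le)
  have hAtpos : 0 < At := lt_of_lt_of_le hApos hAAt
  set ε := (A - m) / (4 * A * (s + 1)) with hε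
  have hεpos : 0 < ε := by positivity
  have hεs : ε * s ≤ (A - m) / (4 * A) := by
    rw [hε, div_mul_eq_mul_div, div_le_div_iff₀ (by positivity) (by positivity)]
    nlinarith [hAm, hApos, Nat.cast_nonneg (α := ℝ) s]
  set N := ε * s + 2 + 8 * At / (A - m) with hN
  have hN2 : 2 ≤ N := by
    have h1 : 0 ≤ ε * s := by positivity
    have h2 : 0 ≤ 8 * At / (A - m) := by positivity
    rw [hN]; linarith
  have hNεs : ε * s < N := by
    have h2 : 0 ≤ 8 * At / (A - m) := by positivity
    rw [hN]; linarith
  have hN1 : 8 * At ≤ (A - m) * (N - 1) := by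
    have h1 : 0 ≤ ε * s := by positivity
    have h3 : 8 * At / (A - m) * (A - m) = 8 * At := div_mul_cancel₀ _ (ne_of_gt hAm)
    rw [hN]; nlinarith
  -- the vector of poles
  set d : Fin s → ℝ := fun i => if i = j0 then 0 else if i ∈ S1 then ε * (i.val + 1)
    else N * (i.val + 1) with hd
  have hcard : ∀ i : Fin s, 1 ≤ (i.val : ℝ) + 1 ∧ (i.val : ℝ) + 1 ≤ s := by
    intro i
    constructor
    · have := Nat.cast_nonneg (α := ℝ) i.val; linarith
    · have h := i.isLt
      have : (i.val : ℝ) + 1 ≤ (s : ℝ) := by exact_mod_cast Nat.succ_le_of_lt h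
      exact this
  have hdj0 : d j0 = 0 := by simp [hd]
  have hdS1 : ∀ i ∈ S1, d i = ε * (i.val + 1) := by
    intro i hi
    have : i ≠ j0 := fun h => (Finset.disjoint_left.mp h14) hi (h ▸ hj0)
    simp [hd, this, hi]
  have hdS1bounds : ∀ i ∈ S1, ε ≤ d i ∧ d i ≤ ε * s := by
    intro i hi
    rw [hdS1 i hi]
    obtain ⟨h1, h2⟩ := hcard i
    constructor
    · nlinarith
    · nlinarith
  have hdother : ∀ i, i ≠ j0 → i ∉ S1 → d i = N * (i.val + 1) := by
    intro i h1 h2; simp [hd, h1, h2]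
  have hdotherge : ∀ i, i ≠ j0 → i ∉ S1 → N ≤ d i := by
    intro i h1 h2
    rw [hdother i h1 h2]
    obtain ⟨hc1, _⟩ := hcard i
    nlinarith
  have hdS3 : ∀ k ∈ S3, N ≤ d k := by
    intro k hk
    exact hdotherge k (fun h => (Finset.disjoint_left.mp h34) hk (h ▸ hj0))
      (fun h => (Finset.disjoint_left.mp h13) h hk)
  have hdnonneg : ∀ i, 0 ≤ d i := by
    intro i
    by_cases h1 : i = j0
    · simp [h1, hdj0]
    · by_cases h2 : i ∈ S1
      · exact le_trans hεpos.le (hdS1bounds i h2).1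
      · exact le_trans (by linarith : (0:ℝ) ≤ N) (hdotherge i h1 h2)
  have hdinj : Function.Injective d := by
    intro i j hij
    by_cases hi : i = j0 <;> by_cases hj : j = j0
    · rw [hi, hj]
    · exfalso
      rw [hi, hdj0] at hij
      by_cases h2 : j ∈ S1
      · have := (hdS1bounds j h2).1; linarith [hεpos]
      · have := hdotherge j hj h2; linarith
    · exfalso
      rw [hj, hdj0] at hij
      by_cases h2 : i ∈ S1
      · have := (hdS1bounds i h2).1; linarith [hεpos]
      · have := hdotherge i hi h2; linarith
    · by_cases h2 : i ∈ S1 <;> by_cases h3 : j ∈ S1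
      · rw [hdS1 i h2, hdS1 j h3] at hij
        have h' := mul_left_cancel₀ (ne_of_gt hεpos) hij
        have : (i.val : ℝ) = (j.val : ℝ) := by linarith
        exact Fin.ext (by exact_mod_cast this)
      · exfalso
        have hb1 := (hdS1bounds i h2).2
        have hb2 := hdotherge j hj h3
        rw [hij] at hb1
        linarith
      · exfalso
        have hb1 := (hdS1bounds j h3).2
        have hb2 := hdotherge i hi h2
        rw [← hij] at hb1
        linarith
      · rw [hdother i hi h2, hdother j hj h3] at hij
        have hN0 : (0:ℝ) < N := by linarith
        have h' := mul_left_cancel₀ (ne_of_gt hN0) hij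
        have : (i.val : ℝ) = (j.val : ℝ) := by linarith
        exact Fin.ext (by exact_mod_cast this)
  -- the right endpoint of the interval
  set R := S3.inf' hS3 d with hR
  obtain ⟨k0, hk0S3, hk0⟩ := Finset.exists_mem_eq_inf' hS3 d
  have hNR : N ≤ R := by
    rw [hR]
    exact Finset.le_inf' _ _ (fun k hk => hdS3 k hk)
  have hRk : ∀ k ∈ S3, R ≤ d k := fun k hk => hR ▸ Finset.inf'_le _ hk
  -- positivity of arguments on (0, R)
  have hposI : ∀ z ∈ Set.Ioo (0:ℝ) R,
      (∀ i ∈ S1, 0 < z + d i) ∧ (∀ k ∈ S3, 0 < d k - z) ∧ (∀ j ∈ S4, 0 < z + d j) := by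
    intro z hz
    refine ⟨fun i hi => ?_, fun k hk => ?_, fun j hj => ?_⟩
    · have := hdnonneg i; linarith [hz.1]
    · have := hRk k hk; linarith [hz.2]
    · have := hdnonneg j; linarith [hz.1]
  have hmemI : ∀ z ∈ Set.Ioo (0:ℝ) R,
      (∀ i ∈ S1 ∪ S4, -d i < z) ∧ (∀ i ∈ S3, z < d i) := by
    intro z hz
    constructor
    · intro i _
      have := hdnonneg i; linarith [hz.1]
    · intro k hk
      have := hRk k hk; linarith [hz.2]
  set f := gFun S1 ∅ S3 S4 a d with hf
  set f' := gDeriv S1 ∅ S3 S4 a d with hf'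
  have hdf : ∀ z ∈ Set.Ioo (0:ℝ) R, HasDerivAt f (f' z) z := fun z hz =>
    hasDerivAt_gFun_s1 S1 S3 S4 a d (hposI z hz).1 (hposI z hz).2.1 (hposI z hz).2.2
  have hdf' : ∀ z ∈ Set.Ioo (0:ℝ) R, HasDerivAt f' (gDeriv2 S1 S3 S4 a d z) z := fun z hz =>
    hasDerivAt_gDeriv_s1 S1 S3 S4 a d (hposI z hz).1 (hposI z hz).2.1 (hposI z hz).2.2
  have h1R : (1:ℝ) ∈ Set.Ioo (0:ℝ) R := ⟨one_pos, by linarith⟩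
  -- the derivative at 1 is positive
  have hderiv1 : (A - m) / 4 ≤ f' 1 := by
    have e0 : f' 1 = (∑ i ∈ S1, a i / (1 + d i)) - (∑ k ∈ S3, a k / (d k - 1))
        - ∑ j ∈ S4, a j / (1 + d j) := by
      simp [hf', gDeriv]
    have b1 : A / (1 + ε * s) ≤ ∑ i ∈ S1, a i / (1 + d i) := by
      rw [hA, Finset.sum_div]
      refine Finset.sum_le_sum (fun i hi => ?_)
      have hb := hdS1bounds i hi
      exact div_le_div_of_nonneg_left (ha i).le (by nlinarith [hεpos]) (by linarith [hb.2])
    have b3 : ∑ k ∈ S3, a k / (d k - 1) ≤ At / (N - 1) := by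
      have : ∑ k ∈ S3, a k / (d k - 1) ≤ ∑ k ∈ S3, a k / (N - 1) := by
        refine Finset.sum_le_sum (fun k hk => ?_)
        have := hdS3 k hk
        exact div_le_div_of_nonneg_left (ha k).le (by linarith) (by linarith)
      refine le_trans this ?_
      rw [← Finset.sum_div]
      exact div_le_div_of_nonneg_right (Finset.sum_le_sum_of_subset_of_nonneg
        (Finset.subset_univ S3) (fun i _ _ => (ha i).le)) (by linarith)
    have b4 : ∑ j ∈ S4, a j / (1 + d j) ≤ m + At / (N - 1) := by
      rw [← Finset.add_sum_erase _ _ hj0]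
      have e1 : a j0 / (1 + d j0) = m := by rw [hdj0, hm]; norm_num
      rw [e1]
      have : ∑ j ∈ S4.erase j0, a j / (1 + d j) ≤ ∑ j ∈ S4.erase j0, a j / (N - 1) := by
        refine Finset.sum_le_sum (fun j hjj => ?_)
        have hj1 : j ≠ j0 := Finset.ne_of_mem_erase hjj
        have hj2 : j ∉ S1 := fun h =>
          (Finset.disjoint_left.mp h14) h (Finset.mem_of_mem_erase hjj)
        have := hdotherge j hj1 hj2
        exact div_le_div_of_nonneg_left (ha j).le (by linarith) (by linarith)
      have h2 : ∑ j ∈ S4.erase j0, a j / (N - 1) ≤ At / (N - 1) := by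
        rw [← Finset.sum_div]
        exact div_le_div_of_nonneg_right (Finset.sum_le_sum_of_subset_of_nonneg
          (Finset.subset_univ _) (fun i _ _ => (ha i).le)) (by linarith)
      linarith
    have c1 : A - (A - m) / 4 ≤ A / (1 + ε * s) := by
      have hεs0 : 0 ≤ ε * s := by positivity
      have h4 : (A - m) / (4 * A) * A = (A - m) / 4 := by field_simp
      have h5 : ε * s * A ≤ (A - m) / 4 := by
        calc ε * s * A ≤ (A - m) / (4 * A) * A := by nlinarith
          _ = (A - m) / 4 := h4
      rw [le_div_iff₀ (by linarith)]
      nlinarith [h5, mul_nonneg (by positivity : (0:ℝ) ≤ (A - m) / 4) hεs0]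
    have c2 : 2 * (At / (N - 1)) ≤ (A - m) / 4 := by
      have hN1' : (0:ℝ) < N - 1 := by linarith
      rw [mul_div_assoc' , div_le_div_iff₀ hN1' (by norm_num)]
      nlinarith [hN1]
    rw [e0]
    have hb3' := b3
    linarith
  have hf'1pos : 0 < f' 1 := lt_of_lt_of_le (by positivity) hderiv1
  -- splitting off the singular terms
  have e_split0 : ∀ z : ℝ, f z = gFun S1 ∅ S3 (S4.erase j0) a d z - a j0 * Real.log z := by
    intro z
    have e4 : ∑ j ∈ S4, a j * Real.log (z + d j)
        = a j0 * Real.log z + ∑ j ∈ S4.erase j0, a j * Real.log (z + d j) := by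
      rw [← Finset.add_sum_erase _ _ hj0, hdj0, add_zero]
    simp only [hf, gFun, Finset.sum_empty, e4]
    ring
  have e_split3 : ∀ z : ℝ, f z = gFun S1 ∅ (S3.erase k0) S4 a d z
      + a k0 * Real.log (R - z) := by
    intro z
    have e3 : ∑ k ∈ S3, a k * Real.log (d k - z)
        = a k0 * Real.log (R - z) + ∑ k ∈ S3.erase k0, a k * Real.log (d k - z) := by
      rw [← Finset.add_sum_erase _ _ hk0S3, ← hk0]
    simp only [hf, gFun, Finset.sum_empty, e3]
    ring
  have hNpos : (0:ℝ) < N := by linarith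
  -- continuity of the regular parts
  have hcont0 : ContinuousAt (gFun S1 ∅ S3 (S4.erase j0) a d) 0 := by
    refine (hasDerivAt_gFun_s1 S1 S3 (S4.erase j0) a d ?_ ?_ ?_).continuousAt
    · intro i hi
      have := (hdS1bounds i hi).1; linarith [hεpos]
    · intro k hk
      have := hdS3 k hk; linarith
    · intro j hjj
      have hj1 : j ≠ j0 := Finset.ne_of_mem_erase hjj
      have hj2 : j ∉ S1 := fun h =>
        (Finset.disjoint_left.mp h14) h (Finset.mem_of_mem_erase hjj)
      have := hdotherge j hj1 hj2; linarith
  have hcontR : ContinuousAt (gFun S1 ∅ (S3.erase k0) S4 a d) R := by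
    refine (hasDerivAt_gFun_s1 S1 (S3.erase k0) S4 a d ?_ ?_ ?_).continuousAt
    · intro i hi
      have := hdnonneg i; linarith
    · intro k hkk
      have hk1 : k ≠ k0 := Finset.ne_of_mem_erase hkk
      have hk2 := hRk k (Finset.mem_of_mem_erase hkk)
      have hk3 : d k ≠ R := fun h => hk1 (hdinj (h.trans hk0))
      cases lt_or_eq_of_le hk2 with
      | inl h => linarith
      | inr h => exact absurd h.symm hk3
    · intro j hjj
      have := hdnonneg j; linarith
  -- limit at 0⁺ : f → +∞
  have htop : Tendsto f (nhdsWithin 0 (Set.Ioi (0:ℝ))) atTop := by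
    have hP : Tendsto (gFun S1 ∅ S3 (S4.erase j0) a d) (nhdsWithin 0 (Set.Ioi (0:ℝ)))
        (nhds (gFun S1 ∅ S3 (S4.erase j0) a d 0)) :=
      hcont0.tendsto.mono_left nhdsWithin_le_nhds
    have hlog : Tendsto (fun z => a j0 * Real.log z) (nhdsWithin 0 (Set.Ioi (0:ℝ))) atBot :=
      Tendsto.const_mul_atBot hmpos Real.tendsto_log_nhdsGT_zero
    have hneg : Tendsto (fun z => -(a j0 * Real.log z)) (nhdsWithin 0 (Set.Ioi (0:ℝ))) atTop :=
      tendsto_neg_atBot_atTop.comp hlog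
    have heq : f = fun z => -(a j0 * Real.log z) + gFun S1 ∅ S3 (S4.erase j0) a d z := by
      funext z; rw [e_split0 z]; ring
    rw [heq]
    exact tendsto_atTop_add_right_of_le' _ (gFun S1 ∅ S3 (S4.erase j0) a d 0 - 1) hneg
      (hP.eventually (eventually_ge_nhds (by linarith)))
  -- limit at R⁻ : f → -∞
  have hbot : Tendsto f (nhdsWithin R (Set.Iio R)) atBot := by
    have hPR : Tendsto (gFun S1 ∅ (S3.erase k0) S4 a d) (nhdsWithin R (Set.Iio R))
        (nhds (gFun S1 ∅ (S3.erase k0) S4 a d R)) :=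
      hcontR.tendsto.mono_left nhdsWithin_le_nhds
    have hcomp : Tendsto (fun z => R - z) (nhdsWithin R (Set.Iio R))
        (nhdsWithin 0 (Set.Ioi (0:ℝ))) := by
      rw [tendsto_nhdsWithin_iff]
      constructor
      · have : Tendsto (fun z : ℝ => R - z) (nhds R) (nhds (R - R)) :=
          (continuous_const.sub continuous_id).tendsto R
        simpa using this.mono_left nhdsWithin_le_nhds
      · exact Filter.eventually_of_mem self_mem_nhdsWithin (fun z hz => Set.mem_Ioi.mpr (sub_pos.mpr hz))
    have hlogR : Tendsto (fun z => a k0 * Real.log (R - z)) (nhdsWithin R (Set.Iio R)) atBot :=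
      Tendsto.const_mul_atBot (ha k0) (Real.tendsto_log_nhdsGT_zero.comp hcomp)
    have heq : f = fun z => a k0 * Real.log (R - z) + gFun S1 ∅ (S3.erase k0) S4 a d z := by
      funext z; rw [e_split3 z]; ring
    rw [heq]
    exact tendsto_atBot_add_right_of_ge' _ (gFun S1 ∅ (S3.erase k0) S4 a d R + 1) hlogR
      (hPR.eventually (eventually_le_nhds (by linarith)))
  have hR1 : (1:ℝ) < R := by linarith
  -- find t ∈ (1, R) with f t > f 1, via the positive derivative at 1
  obtain ⟨t, hslt, htI⟩ : ∃ t, 0 < slope f 1 t ∧ t ∈ Set.Ioo (1:ℝ) R := by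
    have hslope := hasDerivAt_iff_tendsto_slope.mp (hdf 1 h1R)
    have h1 : ∀ᶠ x in nhdsWithin 1 (Set.Ioi (1:ℝ)), 0 < slope f 1 x :=
      nhdsWithin_mono 1 (fun x hx => ne_of_gt hx)
        (hslope.eventually_const_lt hf'1pos)
    have hmem : Set.Ioo (1:ℝ) R ∈ nhdsWithin 1 (Set.Ioi (1:ℝ)) :=
      Ioo_mem_nhdsGT_of_mem ⟨le_rfl, hR1⟩
    exact (h1.and (Filter.eventually_of_mem hmem (fun x hx => hx))).exists
  have hft1 : f 1 < f t := by
    rw [slope_def_field] at hslt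
    rcases div_pos_iff.mp hslt with ⟨h4, h5⟩ | ⟨h4, h5⟩
    · linarith
    · linarith [htI.1]
  -- find u ∈ (0,1) with f u > f t
  obtain ⟨u, hfu, huI⟩ : ∃ u, f t < f u ∧ u ∈ Set.Ioo (0:ℝ) 1 := by
    have h1 : ∀ᶠ x in nhdsWithin 0 (Set.Ioi (0:ℝ)), f t < f x := htop.eventually_gt_atTop _
    have hmem : Set.Ioo (0:ℝ) 1 ∈ nhdsWithin 0 (Set.Ioi (0:ℝ)) :=
      Ioo_mem_nhdsGT_of_mem ⟨le_rfl, one_pos⟩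
    exact (h1.and (Filter.eventually_of_mem hmem (fun x hx => hx))).exists
  -- find v ∈ (t, R) with f v < f 1
  obtain ⟨v, hfv, hvI⟩ : ∃ v, f v < f 1 ∧ v ∈ Set.Ioo t R := by
    have h1 : ∀ᶠ x in nhdsWithin R (Set.Iio R), f x < f 1 := hbot.eventually_lt_atBot _
    have hmem : Set.Ioo t R ∈ nhdsWithin R (Set.Iio R) :=
      Ioo_mem_nhdsLT_of_mem ⟨htI.2, le_rfl⟩
    exact (h1.and (Filter.eventually_of_mem hmem (fun x hx => hx))).exists
  -- levels
  set Km := f 1 + (f t - f 1) / 3 with hKm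
  set Kp := f 1 + 2 * (f t - f 1) / 3 with hKp
  have hKmp : Km < Kp := by rw [hKm, hKp]; linarith
  have hK1m : f 1 < Km := by rw [hKm]; linarith
  have hKpt : Kp < f t := by rw [hKp]; linarith
  clear_value Km Kp
  -- branch 1 crossing
  have hIccu1 : Set.Icc u 1 ⊆ Set.Ioo (0:ℝ) R := fun x hx =>
    ⟨lt_of_lt_of_le huI.1 hx.1, lt_of_le_of_lt hx.2 hR1⟩
  obtain ⟨x₁, hx₁I, hx₁d, hx₁m, hx₁p⟩ := exists_neg_deriv_crossing (f := f) (f' := f')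
    huI.2 hKmp (fun x hx => hdf x (hIccu1 hx)) (by linarith) (by linarith)
  have hx₁Ioo : x₁ ∈ Set.Ioo (0:ℝ) R := hIccu1 (Set.Ioo_subset_Icc_self hx₁I)
  -- a window around x₁ where f' < 0
  have hcontf'x₁ : ContinuousAt f' x₁ := (hdf' x₁ hx₁Ioo).continuousAt
  have hwind : ∀ᶠ y in nhds x₁, f' y < 0 ∧ y ∈ Set.Ioo u 1 :=
    (hcontf'x₁.tendsto.eventually_lt_const hx₁d).and
      (isOpen_Ioo.eventually_mem hx₁I)
  obtain ⟨δ0, hδ0, hball⟩ := Metric.eventually_nhds_iff.mp hwind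
  set δ := δ0 / 2 with hδ
  have hδpos : 0 < δ := by rw [hδ]; linarith
  have hwin : ∀ y ∈ Set.Icc (x₁ - δ) (x₁ + δ), f' y < 0 ∧ y ∈ Set.Ioo u 1 := by
    intro y hy
    apply hball
    rw [Real.dist_eq, abs_lt]
    constructor
    · have := hy.1; rw [hδ] at *; linarith
    · have := hy.2; rw [hδ] at *; linarith
  -- f is strictly decreasing on the window
  have hIccw : Set.Icc (x₁ - δ) (x₁ + δ) ⊆ Set.Ioo (0:ℝ) R := fun y hy => by
    have h2 := (hwin y hy).2
    exact ⟨lt_trans huI.1 h2.1, lt_trans h2.2 hR1⟩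
  have hanti : StrictAntiOn f (Set.Icc (x₁ - δ) (x₁ + δ)) := by
    refine strictAntiOn_of_deriv_neg (convex_Icc _ _)
      (fun y hy => (hdf y (hIccw hy)).continuousAt.continuousWithinAt) (fun y hy => ?_)
    rw [interior_Icc] at hy
    have hy' : y ∈ Set.Icc (x₁ - δ) (x₁ + δ) := Set.Ioo_subset_Icc_self hy
    rw [(hdf y (hIccw hy')).deriv]
    exact (hwin y hy').1
  have hmemx₁ : x₁ ∈ Set.Icc (x₁ - δ) (x₁ + δ) := by
    constructor <;> [linarith; linarith]
  have hmemp : x₁ - δ ∈ Set.Icc (x₁ - δ) (x₁ + δ) := by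
    constructor <;> [linarith; linarith]
  have hmemq : x₁ + δ ∈ Set.Icc (x₁ - δ) (x₁ + δ) := by
    constructor <;> [linarith; linarith]
  have hglt : f (x₁ + δ) < f x₁ := hanti hmemx₁ hmemq (by linarith)
  have hggt : f x₁ < f (x₁ - δ) := hanti hmemp hmemx₁ (by linarith)
  -- margins
  obtain ⟨η, hηpos, hηl, hηr⟩ : ∃ x : ℝ, 0 < x ∧ x ≤ f (x₁ - δ) - f x₁ ∧
      x ≤ f x₁ - f (x₁ + δ) :=
    ⟨min (f (x₁ - δ) - f x₁) (f x₁ - f (x₁ + δ)), lt_min (by linarith) (by linarith),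
      min_le_left _ _, min_le_right _ _⟩
  obtain ⟨η₂, hη₂pos, hη₂η, hη₂t, hη₂v⟩ :
      ∃ x : ℝ, 0 < x ∧ x < η ∧ x ≤ (f t - Kp) / 2 ∧ x ≤ (Km - f v) / 2 := by
    have h1 : 0 < f t - Kp := by linarith
    have h2 : 0 < Km - f v := by linarith
    have h3 := lt_min hηpos (lt_min h1 h2)
    have h4 := min_le_left η (min (f t - Kp) (Km - f v))
    have h5 := (min_le_right η (min (f t - Kp) (Km - f v))).trans
      (min_le_left (f t - Kp) (Km - f v))
    have h6 := (min_le_right η (min (f t - Kp) (Km - f v))).trans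
      (min_le_right (f t - Kp) (Km - f v))
    exact ⟨min η (min (f t - Kp) (Km - f v)) / 2, by linarith, by linarith,
      by linarith, by linarith⟩
  -- branch 2 crossing
  have hIcctv : Set.Icc t v ⊆ Set.Ioo (0:ℝ) R := fun x hx =>
    ⟨lt_trans one_pos (lt_of_lt_of_le htI.1 hx.1), lt_of_le_of_lt hx.2 hvI.2⟩
  obtain ⟨x₂, hx₂I, hx₂d, hx₂m, hx₂p⟩ := exists_neg_deriv_crossing (f := f) (f' := f')
    hvI.1 (by linarith : f x₁ - η₂ < f x₁ + η₂)
    (fun x hx => hdf x (hIcctv hx))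
    (by linarith : f x₁ + η₂ < f t)
    (by linarith : f v < f x₁ - η₂)
  -- pull the level f x₂ back to the window around x₁ by IVT
  have hc : ContinuousOn f (Set.Icc (x₁ - δ) (x₁ + δ)) :=
    fun y hy => (hdf y (hIccw hy)).continuousAt.continuousWithinAt
  have hivtset : Set.Icc (f (x₁ + δ)) (f (x₁ - δ)) ⊆
      f '' Set.Icc (x₁ - δ) (x₁ + δ) := intermediate_value_Icc' (by linarith) hc
  have hfx₂mem : f x₂ ∈ Set.Icc (f (x₁ + δ)) (f (x₁ - δ)) := by
    constructor
    · linarith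
    · linarith
  obtain ⟨z₁, hz₁mem, hz₁val⟩ := hivtset hfx₂mem
  have hz₁win := hwin z₁ hz₁mem
  -- conclusion
  refine ⟨d, hdinj, f x₂, z₁, x₂, ?_, ?_, ?_, hz₁val, rfl, hz₁win.1, hx₂d⟩
  · have h1 : z₁ < 1 := hz₁win.2.2
    have h2 : 1 < x₂ := lt_trans htI.1 hx₂I.1
    exact ne_of_lt (by linarith)
  · exact hmemI z₁ ⟨lt_trans huI.1 hz₁win.2.1, lt_trans hz₁win.2.2 hR1⟩
  · exact hmemI x₂ ⟨lt_trans one_pos (lt_trans htI.1 hx₂I.1), lt_trans hx₂I.2 hvI.2⟩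

end Aux

/-- Theorem 3.1(b)(1): if `S1`, `S3`, `S4` are non-empty and `S2 = ∅`, the multistability
criterion holds iff `∑_{i ∈ S1} a i > min_{i ∈ S4} a i`. -/
theorem multistability_b1
    {s : ℕ} (hs : 0 < s)
    (S1 S2 S3 S4 : Finset (Fin s))
    (h12 : Disjoint S1 S2) (h13 : Disjoint S1 S3) (h14 : Disjoint S1 S4)
    (h23 : Disjoint S2 S3) (h24 : Disjoint S2 S4) (h34 : Disjoint S3 S4)
    (hcover : S1 ∪ S2 ∪ S3 ∪ S4 = Finset.univ)
    (a : Fin s → ℝ) (ha : ∀ i, 0 < a i)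
    (hS1 : S1.Nonempty) (hS2 : S2 = ∅) (hS3 : S3.Nonempty) (hS4 : S4.Nonempty) :
    MultistabCriterion S1 S2 S3 S4 a ↔ S4.inf' hS4 a < ∑ i ∈ S1, a i := by
  subst hS2
  constructor
  · rintro ⟨d, hdinj, K, z₁, z₂, hne, hI1, hI2, hg1, hg2, hder1, hder2⟩
    by_contra hcon
    push_neg at hcon
    have hge : ∀ j ∈ S4, ∑ i ∈ S1, a i ≤ a j := fun j hj =>
      le_trans hcon (Finset.inf'_le a hj)
    have hI1' : ∀ k ∈ S3, z₁ < d k := fun k hk =>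
      hI1.2 k (by simpa using Finset.mem_union_right (∅ : Finset (Fin s)) hk)
    have hI2' : ∀ k ∈ S3, z₂ < d k := fun k hk =>
      hI2.2 k (by simpa using Finset.mem_union_right (∅ : Finset (Fin s)) hk)
    rcases lt_or_gt_of_ne hne with h | h
    · exact forward_aux S1 S3 S4 a d ha hS1 hS3 hge h hI1.1 hI2'
        (hg1.trans hg2.symm) hder1
    · exact forward_aux S1 S3 S4 a d ha hS1 hS3 hge h hI2.1 hI1'
        (hg2.trans hg1.symm) hder2
  · intro hlt
    obtain ⟨j0, hj0, hj0min⟩ := Finset.exists_mem_eq_inf' hS4 a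
    rw [hj0min] at hlt
    obtain ⟨d, hdinj, K, z₁, z₂, hne, hm1, hm2, hg1, hg2, hder1, hder2⟩ :=
      backward_aux S1 S3 S4 a ha h14 h13 h34 hS1 hS3 hj0 hlt
    refine ⟨d, hdinj, K, z₁, z₂, hne, ⟨hm1.1, ?_⟩, ⟨hm2.1, ?_⟩, hg1, hg2, hder1, hder2⟩
    · intro i hi
      exact hm1.2 i (by simpa using hi)
    · intro i hi
      exact hm2.2 i (by simpa using hi)
end

section
/- Suppose exactly one of the four sets S₁, S₂, S₃, S₄ is non-empty (and the other three are empty). Then the multistability criterion does not hold; indeed, for any real numbers d₁,…,d_s the function g is strictly monotone on I, so for every K ∈ ℝ the equation g(z) = K has at most one solution in I. (This is Theorem 3.1(d).) -/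
open Finset

/-- Theorem 3.1(d): if exactly one of the four sign classes is non-empty, the multistability
criterion fails; indeed for any `d` the function `g` is strictly monotone on `I`, so `g = K`
has at most one solution in `I`. -/
theorem multistability_d
    {s : ℕ} (hs : 0 < s)
    (S1 S2 S3 S4 : Finset (Fin s))
    (h12 : Disjoint S1 S2) (h13 : Disjoint S1 S3) (h14 : Disjoint S1 S4)
    (h23 : Disjoint S2 S3) (h24 : Disjoint S2 S4) (h34 : Disjoint S3 S4)
    (hcover : S1 ∪ S2 ∪ S3 ∪ S4 = Finset.univ)
    (a : Fin s → ℝ) (ha : ∀ i, 0 < a i)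
    (hone :
      (S1.Nonempty ∧ S2 = ∅ ∧ S3 = ∅ ∧ S4 = ∅) ∨
      (S2.Nonempty ∧ S1 = ∅ ∧ S3 = ∅ ∧ S4 = ∅) ∨
      (S3.Nonempty ∧ S1 = ∅ ∧ S2 = ∅ ∧ S4 = ∅) ∨
      (S4.Nonempty ∧ S1 = ∅ ∧ S2 = ∅ ∧ S3 = ∅)) :
    ¬ MultistabCriterion S1 S2 S3 S4 a ∧
      ∀ d : Fin s → ℝ,
        (StrictMonoOn (gFun S1 S2 S3 S4 a d) {z | memI S1 S2 S3 S4 d z} ∨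
         StrictAntiOn (gFun S1 S2 S3 S4 a d) {z | memI S1 S2 S3 S4 d z}) ∧
        ∀ (K : ℝ) (z₁ z₂ : ℝ), memI S1 S2 S3 S4 d z₁ → memI S1 S2 S3 S4 d z₂ →
          gFun S1 S2 S3 S4 a d z₁ = K → gFun S1 S2 S3 S4 a d z₂ = K → z₁ = z₂ := by

  have key : ∀ d : Fin s → ℝ,
      StrictMonoOn (gFun S1 S2 S3 S4 a d) {z | memI S1 S2 S3 S4 d z} ∨
      StrictAntiOn (gFun S1 S2 S3 S4 a d) {z | memI S1 S2 S3 S4 d z} := by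
    intro d
    rcases hone with ⟨hne, h2, h3, h4⟩ | ⟨hne, h1, h3, h4⟩ | ⟨hne, h1, h2, h4⟩ | ⟨hne, h1, h2, h3⟩
    · left
      intro x hx y hy hxy
      simp only [gFun, h2, h3, h4, Finset.sum_empty, sub_zero, add_zero]
      refine Finset.sum_lt_sum_of_nonempty hne fun i hi => ?_
      have hpx : -d i < x := hx.1 i (Finset.mem_union_left _ hi)
      exact mul_lt_mul_of_pos_left (Real.log_lt_log (by linarith) (by linarith)) (ha i)
    · left
      intro x hx y hy hxy
      simp only [gFun, h1, h3, h4, Finset.sum_empty, sub_zero, add_zero, zero_sub]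
      rw [neg_lt_neg_iff]
      refine Finset.sum_lt_sum_of_nonempty hne fun i hi => ?_
      have hpy : y < d i := hy.2 i (Finset.mem_union_left _ hi)
      exact mul_lt_mul_of_pos_left (Real.log_lt_log (by linarith) (by linarith)) (ha i)
    · right
      intro x hx y hy hxy
      simp only [gFun, h1, h2, h4, Finset.sum_empty, sub_zero, zero_sub, zero_add, neg_zero,
        add_zero]
      refine Finset.sum_lt_sum_of_nonempty hne fun i hi => ?_
      have hpy : y < d i := hy.2 i (Finset.mem_union_right _ hi)
      exact mul_lt_mul_of_pos_left (Real.log_lt_log (by linarith) (by linarith)) (ha i)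
    · right
      intro x hx y hy hxy
      simp only [gFun, h1, h2, h3, Finset.sum_empty, sub_zero, add_zero, zero_sub]
      rw [neg_lt_neg_iff]
      refine Finset.sum_lt_sum_of_nonempty hne fun i hi => ?_
      have hpx : -d i < x := hx.1 i (Finset.mem_union_right _ hi)
      exact mul_lt_mul_of_pos_left (Real.log_lt_log (by linarith) (by linarith)) (ha i)
  have inj : ∀ d (K z₁ z₂ : ℝ), memI S1 S2 S3 S4 d z₁ → memI S1 S2 S3 S4 d z₂ →
      gFun S1 S2 S3 S4 a d z₁ = K → gFun S1 S2 S3 S4 a d z₂ = K → z₁ = z₂ := by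
    intro d K z₁ z₂ m1 m2 e1 e2
    rcases key d with h | h
    · exact h.injOn m1 m2 (e1.trans e2.symm)
    · exact h.injOn m1 m2 (e1.trans e2.symm)
  refine ⟨?_, fun d => ⟨key d, inj d⟩⟩
  rintro ⟨d, -, K, z₁, z₂, hne, m1, m2, e1, e2, -, -⟩
  exact hne (inj d K z₁ z₂ m1 m2 e1 e2)
end
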